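/- arXiv:0906.1883 — 4 statements merged into one kernel-verified Lean document; each statement's English description precedes it below -/
import Mathlib

section
/- Let (S,Σ) be a measurable space, μ a probability measure on (S,Σ), and X a Banach space. If F: Σ → X is a countably additive vector measure of bounded γ-variation with respect to μ, then for every finite collection of disjoint sets A_1,…,A_N ∈ Σ with μ(A_n) > 0 for all n and all scalars c_1,…,c_N one has ‖Σ_{n=1}^N c_n F(A_n)‖ ≤ (Σ_{n=1}^N |c_n|² μ(A_n))^{1/2} · ‖F‖_{V_γ(μ;X)}. In particular, F is of bounded 2-semivariation with respect to μ. -/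
open MeasureTheory ProbabilityTheory Function
open scoped ENNReal NNReal

noncomputable section

/-- `γ` is a sequence of independent standard Gaussian random variables on `(Ω, P)`. -/
def IsStdGaussianSeq {Ω : Type*} [MeasurableSpace Ω] (P : Measure Ω) (γ : ℕ → Ω → ℝ) : Prop :=
  (∀ n, Measurable (γ n)) ∧ ProbabilityTheory.iIndepFun γ P ∧
    ∀ n, Measure.map (γ n) P = ProbabilityTheory.gaussianReal 0 1

/-- The set of quantities `(𝔼 ‖∑ γ_n F(A_n)/√(μ(A_n))‖²)^{1/2}`, taken over all finite
collections of disjoint measurable sets of positive measure; its supremum is the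
`γ`-variation of `F` with respect to `μ`. -/
def gammaVarSet {S : Type*} [MeasurableSpace S] {X : Type*} [NormedAddCommGroup X]
    [NormedSpace ℝ X] {Ω : Type*} [MeasurableSpace Ω] (P : Measure Ω) (γ : ℕ → Ω → ℝ)
    (μ : Measure S) (F : Set S → X) : Set ℝ :=
  { v | ∃ (N : ℕ) (A : Fin N → Set S), (∀ n, MeasurableSet (A n)) ∧
      Pairwise (Disjoint on A) ∧ (∀ n, 0 < μ (A n)) ∧
      v = Real.sqrt (∫ ω, ‖∑ n : Fin N,
            (γ n ω / Real.sqrt ((μ (A n)).toReal)) • F (A n)‖ ^ 2 ∂P) }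

/-- `F` has bounded `γ`-variation with respect to `μ`. -/
def HasBoundedGammaVariation {S : Type*} [MeasurableSpace S] {X : Type*} [NormedAddCommGroup X]
    [NormedSpace ℝ X] {Ω : Type*} [MeasurableSpace Ω] (P : Measure Ω) (γ : ℕ → Ω → ℝ)
    (μ : Measure S) (F : Set S → X) : Prop :=
  BddAbove (gammaVarSet P γ μ F)

/-- The `γ`-variation norm `‖F‖_{V_γ(μ;X)}`. -/
def gammaVar {S : Type*} [MeasurableSpace S] {X : Type*} [NormedAddCommGroup X]
    [NormedSpace ℝ X] {Ω : Type*} [MeasurableSpace Ω] (P : Measure Ω) (γ : ℕ → Ω → ℝ)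
    (μ : Measure S) (F : Set S → X) : ℝ :=
  sSup (gammaVarSet P γ μ F)

end


section GaussAuxSection
open Real

namespace GVAux

lemma integrable_sq_mul_exp :
    Integrable (fun x : ℝ => x ^ 2 * rexp (-(2⁻¹ : ℝ) * x ^ 2)) := by
  have h := integrable_rpow_mul_exp_neg_mul_sq (b := (2⁻¹ : ℝ)) (by norm_num)
      (s := ((2 : ℕ) : ℝ)) (by norm_num)
  simpa [Real.rpow_natCast] using h

lemma integral_sq_mul_exp :
    ∫ x : ℝ, x ^ 2 * rexp (-(2⁻¹ : ℝ) * x ^ 2) = Real.sqrt (2 * Real.pi) := by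
  have hb : (0 : ℝ) < 2⁻¹ := by norm_num
  have hexp : Integrable (fun x : ℝ => rexp (-(2⁻¹ : ℝ) * x ^ 2)) :=
    integrable_exp_neg_mul_sq hb
  have hderiv : ∀ x : ℝ, HasDerivAt (fun x : ℝ => x * rexp (-(2⁻¹ : ℝ) * x ^ 2))
      (rexp (-(2⁻¹ : ℝ) * x ^ 2) - x ^ 2 * rexp (-(2⁻¹ : ℝ) * x ^ 2)) x := by
    intro x
    have h1 : HasDerivAt (fun x : ℝ => -(2⁻¹ : ℝ) * x ^ 2) (-(2⁻¹ : ℝ) * (2 * x ^ 1)) x :=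
      (hasDerivAt_pow 2 x).const_mul _
    have h3 := (hasDerivAt_id x).mul h1.exp
    refine HasDerivAt.congr_deriv h3 ?_
    simp only [id]
    ring
  have h0 : ∫ x : ℝ, (rexp (-(2⁻¹ : ℝ) * x ^ 2) - x ^ 2 * rexp (-(2⁻¹ : ℝ) * x ^ 2)) = 0 :=
    integral_eq_zero_of_hasDerivAt_of_integrable hderiv (hexp.sub integrable_sq_mul_exp)
      (integrable_mul_exp_neg_mul_sq hb)
  rw [integral_sub hexp integrable_sq_mul_exp] at h0
  have hg : ∫ x : ℝ, rexp (-(2⁻¹ : ℝ) * x ^ 2) = Real.sqrt (2 * Real.pi) := by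
    rw [integral_gaussian]
    congr 1
    field_simp
  linarith [hg]

lemma integral_id_mul_exp :
    ∫ x : ℝ, x * rexp (-(2⁻¹ : ℝ) * x ^ 2) = 0 := by
  have hb : (0 : ℝ) < 2⁻¹ := by norm_num
  have hderiv : ∀ x : ℝ, HasDerivAt (fun x : ℝ => -rexp (-(2⁻¹ : ℝ) * x ^ 2))
      (x * rexp (-(2⁻¹ : ℝ) * x ^ 2)) x := by
    intro x
    have h1 : HasDerivAt (fun x : ℝ => -(2⁻¹ : ℝ) * x ^ 2) (-(2⁻¹ : ℝ) * (2 * x ^ 1)) x :=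
      (hasDerivAt_pow 2 x).const_mul _
    have h3 := h1.exp.neg
    refine HasDerivAt.congr_deriv h3 ?_
    ring
  have hsq_top : Filter.Tendsto (fun x : ℝ => x ^ 2) Filter.atTop Filter.atTop :=
    Filter.tendsto_pow_atTop (by norm_num)
  have hsq_bot : Filter.Tendsto (fun x : ℝ => x ^ 2) Filter.atBot Filter.atTop := by
    have := hsq_top.comp Filter.tendsto_neg_atBot_atTop
    simpa [Function.comp_def] using this
  have key : ∀ l : Filter ℝ, Filter.Tendsto (fun x : ℝ => x ^ 2) l Filter.atTop →
      Filter.Tendsto (fun x : ℝ => -rexp (-(2⁻¹ : ℝ) * x ^ 2)) l (nhds 0) := by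
    intro l hl
    have h1 : Filter.Tendsto (fun x : ℝ => (2⁻¹ : ℝ) * x ^ 2) l Filter.atTop :=
      hl.const_mul_atTop (by norm_num)
    have h2 : Filter.Tendsto (fun x : ℝ => -(2⁻¹ : ℝ) * x ^ 2) l Filter.atBot := by
      have := Filter.tendsto_neg_atTop_atBot.comp h1
      simpa [Function.comp_def, neg_mul] using this
    have := Real.tendsto_exp_atBot.comp h2
    simpa [Function.comp_def] using this.neg
  have := integral_of_hasDerivAt_of_tendsto hderiv
      ((integrable_mul_exp_neg_mul_sq hb)) (key _ hsq_bot) (key _ hsq_top)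
  simpa using this


lemma gaussPDF_eq (x : ℝ) :
    gaussianPDFReal 0 1 x = (Real.sqrt (2 * Real.pi))⁻¹ * rexp (-(2⁻¹ : ℝ) * x ^ 2) := by
  rw [gaussianPDFReal]
  simp only [NNReal.coe_one, mul_one, sub_zero]
  congr 1
  ring

lemma integral_gaussReal (g : ℝ → ℝ) :
    ∫ x, g x ∂(gaussianReal 0 1) = ∫ x, gaussianPDFReal 0 1 x * g x := by
  rw [gaussianReal_of_var_ne_zero _ one_ne_zero]
  have hf : Measurable (fun x => (gaussianPDFReal 0 1 x).toNNReal) :=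
    (measurable_gaussianPDFReal 0 1).real_toNNReal
  have hd : (gaussianPDF 0 1) = fun x => ((gaussianPDFReal 0 1 x).toNNReal : ℝ≥0∞) := rfl
  rw [hd, integral_withDensity_eq_integral_smul hf]
  refine integral_congr_ae (ae_of_all _ fun x => ?_)
  simp only [NNReal.smul_def, smul_eq_mul]
  rw [Real.coe_toNNReal _ (gaussianPDFReal_nonneg 0 1 x)]

lemma integral_sq_gaussReal : ∫ x, x ^ 2 ∂(gaussianReal 0 1) = 1 := by
  rw [integral_gaussReal]
  have : (fun x : ℝ => gaussianPDFReal 0 1 x * x ^ 2)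
      = fun x : ℝ => (Real.sqrt (2 * Real.pi))⁻¹ * (x ^ 2 * rexp (-(2⁻¹ : ℝ) * x ^ 2)) := by
    funext x; rw [gaussPDF_eq]; ring
  rw [this, integral_const_mul, integral_sq_mul_exp]
  rw [inv_mul_cancel₀]
  positivity

lemma integral_id_gaussReal : ∫ x, x ∂(gaussianReal 0 1) = 0 := by
  rw [integral_gaussReal]
  have : (fun x : ℝ => gaussianPDFReal 0 1 x * x)
      = fun x : ℝ => (Real.sqrt (2 * Real.pi))⁻¹ * (x * rexp (-(2⁻¹ : ℝ) * x ^ 2)) := by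
    funext x; rw [gaussPDF_eq]; ring
  rw [this, integral_const_mul, integral_id_mul_exp, mul_zero]

lemma integrable_gaussReal (g : ℝ → ℝ)
    (h : Integrable (fun x => g x * gaussianPDFReal 0 1 x)) :
    Integrable g (gaussianReal 0 1) := by
  rw [gaussianReal_of_var_ne_zero _ one_ne_zero]
  rw [integrable_withDensity_iff (measurable_gaussianPDF 0 1)
    (ae_of_all _ fun x => ENNReal.ofReal_lt_top)]
  refine h.congr (ae_of_all _ fun x => ?_)
  show g x * gaussianPDFReal 0 1 x = g x * (gaussianPDF 0 1 x).toReal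
  rw [show gaussianPDF 0 1 x = ENNReal.ofReal (gaussianPDFReal 0 1 x) from rfl,
    ENNReal.toReal_ofReal (gaussianPDFReal_nonneg 0 1 x)]

lemma integrable_id_gaussReal : Integrable (fun x : ℝ => x) (gaussianReal 0 1) := by
  refine integrable_gaussReal _ ?_
  have : (fun x : ℝ => x * gaussianPDFReal 0 1 x)
      = fun x : ℝ => (Real.sqrt (2 * Real.pi))⁻¹ * (x * rexp (-(2⁻¹ : ℝ) * x ^ 2)) := by
    funext x; rw [gaussPDF_eq]; ring
  rw [this]
  exact (integrable_mul_exp_neg_mul_sq (by norm_num)).const_mul _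

lemma integrable_sq_gaussReal : Integrable (fun x : ℝ => x ^ 2) (gaussianReal 0 1) := by
  refine integrable_gaussReal _ ?_
  have : (fun x : ℝ => x ^ 2 * gaussianPDFReal 0 1 x)
      = fun x : ℝ => (Real.sqrt (2 * Real.pi))⁻¹ * (x ^ 2 * rexp (-(2⁻¹ : ℝ) * x ^ 2)) := by
    funext x; rw [gaussPDF_eq]; ring
  rw [this]
  exact Integrable.const_mul integrable_sq_mul_exp _

end GVAux


end GaussAuxSection

section Seq

variable {Ω : Type*} [MeasurableSpace Ω] {P : Measure Ω}
  {γ : ℕ → Ω → ℝ} (hγ : IsStdGaussianSeq P γ)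

include hγ

lemma gseq_mean (n : ℕ) : ∫ ω, γ n ω ∂P = 0 := by
  have h := integral_map (μ := P) (hγ.1 n).aemeasurable
    (f := fun x : ℝ => x) measurable_id.aestronglyMeasurable
  rw [hγ.2.2 n] at h
  rw [← h, GVAux.integral_id_gaussReal]

lemma gseq_sq (n : ℕ) : ∫ ω, γ n ω * γ n ω ∂P = 1 := by
  have h := integral_map (μ := P) (hγ.1 n).aemeasurable
    (f := fun x : ℝ => x * x) (measurable_id.mul measurable_id).aestronglyMeasurable
  rw [hγ.2.2 n] at h
  rw [← h]
  have : ∫ x, x * x ∂(gaussianReal 0 1) = ∫ x, x ^ 2 ∂(gaussianReal 0 1) :=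
    integral_congr_ae (ae_of_all _ fun x => (sq x).symm)
  rw [this, GVAux.integral_sq_gaussReal]

lemma gseq_int (n : ℕ) : Integrable (γ n) P := by
  have h := (integrable_map_measure (μ := P) (f := γ n) (g := fun x : ℝ => x)
    measurable_id.aestronglyMeasurable (hγ.1 n).aemeasurable)
  rw [hγ.2.2 n] at h
  exact h.mp GVAux.integrable_id_gaussReal

lemma gseq_int_sq (n : ℕ) : Integrable (fun ω => γ n ω * γ n ω) P := by
  have h := (integrable_map_measure (μ := P) (f := γ n) (g := fun x : ℝ => x * x)
    (measurable_id.mul measurable_id).aestronglyMeasurable (hγ.1 n).aemeasurable)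
  rw [hγ.2.2 n] at h
  have h2 : Integrable (fun x : ℝ => x * x) (gaussianReal 0 1) :=
    GVAux.integrable_sq_gaussReal.congr (ae_of_all _ fun x => sq x)
  exact h.mp h2

lemma gseq_int_mul (n m : ℕ) : Integrable (fun ω => γ n ω * γ m ω) P := by
  rcases eq_or_ne n m with rfl | hnm
  · exact gseq_int_sq hγ n
  · have := (hγ.2.1.indepFun hnm).integrable_mul (gseq_int hγ n) (gseq_int hγ m)
    exact this.congr (ae_of_all _ fun ω => rfl)

lemma gseq_ortho (n m : ℕ) :
    ∫ ω, γ n ω * γ m ω ∂P = if n = m then 1 else 0 := by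
  rcases eq_or_ne n m with rfl | hnm
  · rw [if_pos rfl]; exact gseq_sq hγ n
  · rw [if_neg hnm]
    have h := (hγ.2.1.indepFun hnm).integral_mul_eq_mul_integral (gseq_int hγ n).aestronglyMeasurable
      (gseq_int hγ m).aestronglyMeasurable
    calc ∫ ω, γ n ω * γ m ω ∂P = ∫ ω, (γ n * γ m) ω ∂P := rfl
      _ = (∫ ω, γ n ω ∂P) * ∫ ω, γ m ω ∂P := h
      _ = 0 := by rw [gseq_mean hγ n, gseq_mean hγ m, mul_zero]

lemma gseq_int_sum_mul (N : ℕ) (a b : Fin N → ℝ) :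
    Integrable (fun ω => (∑ n : Fin N, a n * γ n.val ω) * (∑ m : Fin N, b m * γ m.val ω)) P := by
  have hint : ∀ (n m : Fin N),
      Integrable (fun ω => (a n * γ n.val ω) * (b m * γ m.val ω)) P := fun n m =>
    ((gseq_int_mul hγ n.val m.val).const_mul (a n * b m)).congr (ae_of_all _ fun ω => by ring)
  have : (fun ω => (∑ n : Fin N, a n * γ n.val ω) * (∑ m : Fin N, b m * γ m.val ω))
      = fun ω => ∑ n : Fin N, ∑ m : Fin N, (a n * γ n.val ω) * (b m * γ m.val ω) :=
    funext fun ω => Finset.sum_mul_sum _ _ _ _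
  rw [this]
  exact integrable_finset_sum _ fun n _ => integrable_finset_sum _ fun m _ => hint n m

lemma gseq_expand (N : ℕ) (a b : Fin N → ℝ) :
    ∫ ω, (∑ n : Fin N, a n * γ n.val ω) * (∑ m : Fin N, b m * γ m.val ω) ∂P
      = ∑ n : Fin N, a n * b n := by
  have hint : ∀ (n m : Fin N),
      Integrable (fun ω => (a n * γ n.val ω) * (b m * γ m.val ω)) P := fun n m =>
    ((gseq_int_mul hγ n.val m.val).const_mul (a n * b m)).congr (ae_of_all _ fun ω => by ring)
  have h1 : ∀ n m : Fin N, ∫ ω, (a n * γ n.val ω) * (b m * γ m.val ω) ∂P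
      = a n * b m * (if n.val = m.val then 1 else 0) := by
    intro n m
    have he : (fun ω => (a n * γ n.val ω) * (b m * γ m.val ω))
        = fun ω => (a n * b m) * (γ n.val ω * γ m.val ω) := funext fun ω => by ring
    rw [he, integral_const_mul, gseq_ortho hγ]
  have h2 : (fun ω => (∑ n : Fin N, a n * γ n.val ω) * (∑ m : Fin N, b m * γ m.val ω))
      = fun ω => ∑ n : Fin N, ∑ m : Fin N, (a n * γ n.val ω) * (b m * γ m.val ω) :=
    funext fun ω => Finset.sum_mul_sum _ _ _ _
  rw [h2, integral_finset_sum _ fun n _ => integrable_finset_sum _ fun m _ => hint n m]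
  rw [Finset.sum_congr rfl fun n _ => integral_finset_sum _ fun m _ => hint n m]
  rw [Finset.sum_congr rfl fun n _ => Finset.sum_congr rfl fun m _ => h1 n m]
  refine Finset.sum_congr rfl fun n _ => ?_
  rw [Finset.sum_eq_single n]
  · simp
  · intro m _ hmn
    rw [if_neg (fun h => hmn (Fin.val_injective h).symm), mul_zero]
  · intro h; exact absurd (Finset.mem_univ n) h

end Seq

lemma my_CS {Ω : Type*} [MeasurableSpace Ω] (P : Measure Ω) (f g : Ω → ℝ)
    (hff : Integrable (fun ω => f ω * f ω) P) (hgg : Integrable (fun ω => g ω * g ω) P)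
    (hfg : Integrable (fun ω => f ω * g ω) P) :
    ∫ ω, f ω * g ω ∂P ≤ Real.sqrt (∫ ω, f ω * f ω ∂P) * Real.sqrt (∫ ω, g ω * g ω ∂P) := by
  set A := ∫ ω, f ω * f ω ∂P with hA'
  set B := ∫ ω, g ω * g ω ∂P with hB'
  set C := ∫ ω, f ω * g ω ∂P with hC'
  have hA : 0 ≤ A := integral_nonneg fun ω => mul_self_nonneg _
  have hB : 0 ≤ B := integral_nonneg fun ω => mul_self_nonneg _
  have key : ∀ t : ℝ, 0 ≤ A * (t * t) + (2 * C) * t + B := by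
    intro t
    have h := integral_nonneg (μ := P)
      (f := fun ω => (t * f ω + g ω) * (t * f ω + g ω)) (fun ω => mul_self_nonneg _)
    have he : (fun ω => (t * f ω + g ω) * (t * f ω + g ω))
        = fun ω => ((t * t) * (f ω * f ω) + (2 * t) * (f ω * g ω)) + g ω * g ω :=
      funext fun ω => by ring
    have hfg1 : Integrable (fun ω => (t * t) * (f ω * f ω) + (2 * t) * (f ω * g ω)) P :=
      (hff.const_mul (t * t)).add (hfg.const_mul (2 * t))
    rw [he, integral_add hfg1 hgg,
      integral_add (hff.const_mul (t * t)) (hfg.const_mul (2 * t)),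
      integral_const_mul, integral_const_mul] at h
    calc (0:ℝ) ≤ t * t * A + 2 * t * C + B := h
      _ = A * (t * t) + (2 * C) * t + B := by ring
  have hd := discrim_le_zero key
  rw [discrim] at hd
  have hC2 : C * C ≤ A * B := by nlinarith
  calc C ≤ |C| := le_abs_self C
    _ = Real.sqrt (C * C) := (Real.sqrt_mul_self_eq_abs C).symm
    _ ≤ Real.sqrt (A * B) := Real.sqrt_le_sqrt hC2
    _ = Real.sqrt A * Real.sqrt B := Real.sqrt_mul hA B


/-- If `F : Σ → X` is a countably additive vector measure of bounded
`γ`-variation with respect to `μ`, then for all disjoint measurable `A_1, …, A_N` of positive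
measure and all scalars `c_1, …, c_N`,
`‖∑ c_n F(A_n)‖ ≤ (∑ |c_n|² μ(A_n))^{1/2} ‖F‖_{V_γ(μ;X)}`.
In particular, `F` is of bounded 2-semivariation with respect to `μ`. -/
theorem norm_sum_le_of_boundedGammaVariation
    {S : Type*} [MeasurableSpace S] {X : Type*} [NormedAddCommGroup X] [NormedSpace ℝ X]
    [CompleteSpace X]
    {Ω : Type*} [MeasurableSpace Ω] (P : Measure Ω) [IsProbabilityMeasure P]
    (γ : ℕ → Ω → ℝ) (hγ : IsStdGaussianSeq P γ)
    (μ : Measure S) [IsProbabilityMeasure μ]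
    (F : VectorMeasure S X) (hF : HasBoundedGammaVariation P γ μ ⇑F) :
    (∀ (N : ℕ) (A : Fin N → Set S), (∀ n, MeasurableSet (A n)) →
      Pairwise (Disjoint on A) → (∀ n, 0 < μ (A n)) → ∀ c : Fin N → ℝ,
      ‖∑ n : Fin N, c n • F (A n)‖ ≤
        Real.sqrt (∑ n : Fin N, |c n| ^ 2 * (μ (A n)).toReal) * gammaVar P γ μ ⇑F) ∧
    ∃ C : ℝ, 0 ≤ C ∧ ∀ (N : ℕ) (A : Fin N → Set S), (∀ n, MeasurableSet (A n)) →
      Pairwise (Disjoint on A) → (∀ n, 0 < μ (A n)) → ∀ c : Fin N → ℝ,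
      ‖∑ n : Fin N, c n • F (A n)‖ ≤
        C * Real.sqrt (∑ n : Fin N, |c n| ^ 2 * (μ (A n)).toReal) := by
  classical
  have h0mem : (0:ℝ) ∈ gammaVarSet P γ μ ⇑F := by
    refine ⟨0, Fin.elim0, fun n => n.elim0, fun i => i.elim0, fun n => n.elim0, ?_⟩
    simp [Finset.univ_eq_empty]
  have hVnonneg : 0 ≤ gammaVar P γ μ ⇑F := le_csSup hF h0mem
  have main : ∀ (N : ℕ) (A : Fin N → Set S), (∀ n, MeasurableSet (A n)) →
      Pairwise (Disjoint on A) → (∀ n, 0 < μ (A n)) → ∀ c : Fin N → ℝ,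
      ‖∑ n : Fin N, c n • F (A n)‖ ≤
        Real.sqrt (∑ n : Fin N, |c n| ^ 2 * (μ (A n)).toReal) * gammaVar P γ μ ⇑F := by
    intro N A hA hdisj hpos c
    set V := gammaVar P γ μ ⇑F with hV
    have hmpos : ∀ n, 0 < (μ (A n)).toReal :=
      fun n => ENNReal.toReal_pos (hpos n).ne' (measure_ne_top μ _)
    have hsm : ∀ n, 0 < Real.sqrt ((μ (A n)).toReal) :=
      fun n => Real.sqrt_pos.mpr (hmpos n)
    obtain ⟨φ, hφnorm, hφy0⟩ := exists_dual_vector'' ℝ (∑ n : Fin N, c n • F (A n))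
    have hφy : φ (∑ n : Fin N, c n • F (A n)) = ‖∑ n : Fin N, c n • F (A n)‖ := by
      exact_mod_cast hφy0
    set a : Fin N → ℝ := fun n => c n * Real.sqrt ((μ (A n)).toReal) with ha
    set b : Fin N → ℝ := fun n => φ (F (A n)) / Real.sqrt ((μ (A n)).toReal) with hb
    set G : Ω → X :=
      fun ω => ∑ n : Fin N, (γ n.val ω / Real.sqrt ((μ (A n)).toReal)) • F (A n) with hG
    have hGmem : Real.sqrt (∫ ω, ‖G ω‖ ^ 2 ∂P) ∈ gammaVarSet P γ μ ⇑F :=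
      ⟨N, A, hA, hdisj, hpos, rfl⟩
    have hGle : Real.sqrt (∫ ω, ‖G ω‖ ^ 2 ∂P) ≤ V := le_csSup hF hGmem
    have hUG : ∀ ω, (∑ n : Fin N, b n * γ n.val ω) = φ (G ω) := by
      intro ω
      rw [hG, map_sum]
      refine Finset.sum_congr rfl fun n _ => ?_
      rw [_root_.map_smul, smul_eq_mul, hb]
      field_simp
    set r : Fin N → ℝ := fun n => ‖F (A n)‖ / Real.sqrt ((μ (A n)).toReal) with hr
    have hGnorm : ∀ ω, ‖G ω‖ ≤ ∑ n : Fin N, r n * |γ n.val ω| := by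
      intro ω
      refine (norm_sum_le _ _).trans_eq (Finset.sum_congr rfl fun n _ => ?_)
      rw [norm_smul, Real.norm_eq_abs, abs_div, abs_of_nonneg (Real.sqrt_nonneg _), hr]
      ring
    have hHint : Integrable (fun ω => ∑ n : Fin N, ∑ p : Fin N,
        (r n * r p) * |γ n.val ω * γ p.val ω|) P :=
      integrable_finset_sum _ fun n _ => integrable_finset_sum _ fun p _ =>
        ((gseq_int_mul hγ n.val p.val).abs).const_mul _
    have hGmeas : AEStronglyMeasurable G P := by
      refine Finset.aestronglyMeasurable_fun_sum _ fun n _ => ?_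
      exact (continuous_id.smul continuous_const).comp_aestronglyMeasurable
        ((hγ.1 n.val).div_const _).aestronglyMeasurable
    have hG2int : Integrable (fun ω => ‖G ω‖ ^ 2) P := by
      refine Integrable.mono' hHint
        (((continuous_pow 2).comp continuous_norm).comp_aestronglyMeasurable hGmeas)
        (ae_of_all _ fun ω => ?_)
      have h1 : ‖(‖G ω‖ ^ 2 : ℝ)‖ = ‖G ω‖ ^ 2 := by
        rw [Real.norm_eq_abs, abs_of_nonneg (pow_nonneg (norm_nonneg _) 2)]
      rw [h1]
      calc ‖G ω‖ ^ 2 ≤ (∑ n : Fin N, r n * |γ n.val ω|) ^ 2 :=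
            pow_le_pow_left₀ (norm_nonneg _) (hGnorm ω) 2
        _ = (∑ n : Fin N, r n * |γ n.val ω|) * (∑ p : Fin N, r p * |γ p.val ω|) := sq _
        _ = ∑ n : Fin N, ∑ p : Fin N, (r n * |γ n.val ω|) * (r p * |γ p.val ω|) :=
            Finset.sum_mul_sum _ _ _ _
        _ = ∑ n : Fin N, ∑ p : Fin N, (r n * r p) * |γ n.val ω * γ p.val ω| := by
            refine Finset.sum_congr rfl fun n _ => Finset.sum_congr rfl fun p _ => ?_
            rw [abs_mul]; ring
    have hUU_le : (∫ ω, (∑ n : Fin N, b n * γ n.val ω) * (∑ n : Fin N, b n * γ n.val ω) ∂P)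
        ≤ ∫ ω, ‖G ω‖ ^ 2 ∂P := by
      refine integral_mono (gseq_int_sum_mul hγ N b b) hG2int fun ω => ?_
      simp only [hUG ω]
      have h1 : |φ (G ω)| ≤ ‖G ω‖ := by
        calc |φ (G ω)| = ‖φ (G ω)‖ := rfl
          _ ≤ ‖φ‖ * ‖G ω‖ := φ.le_opNorm (G ω)
          _ ≤ 1 * ‖G ω‖ := mul_le_mul_of_nonneg_right hφnorm (norm_nonneg _)
          _ = ‖G ω‖ := one_mul _
      calc φ (G ω) * φ (G ω) = |φ (G ω)| * |φ (G ω)| := (abs_mul_abs_self _).symm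
        _ ≤ ‖G ω‖ * ‖G ω‖ := mul_le_mul h1 h1 (abs_nonneg _) (norm_nonneg _)
        _ = ‖G ω‖ ^ 2 := (sq _).symm
    have hbb : ∑ n : Fin N, b n * b n ≤ V ^ 2 := by
      rw [← gseq_expand hγ N b b]
      refine hUU_le.trans ?_
      have h2 : ∫ ω, ‖G ω‖ ^ 2 ∂P = Real.sqrt (∫ ω, ‖G ω‖ ^ 2 ∂P) ^ 2 :=
        (Real.sq_sqrt (integral_nonneg fun ω => pow_nonneg (norm_nonneg _) 2)).symm
      rw [h2]
      exact pow_le_pow_left₀ (Real.sqrt_nonneg _) hGle 2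
    have haa : ∑ n : Fin N, a n * a n = ∑ n : Fin N, |c n| ^ 2 * (μ (A n)).toReal := by
      refine Finset.sum_congr rfl fun n _ => ?_
      rw [ha, sq_abs]
      calc c n * Real.sqrt ((μ (A n)).toReal) * (c n * Real.sqrt ((μ (A n)).toReal))
          = c n ^ 2 * (Real.sqrt ((μ (A n)).toReal) * Real.sqrt ((μ (A n)).toReal)) := by ring
        _ = c n ^ 2 * (μ (A n)).toReal := by rw [Real.mul_self_sqrt (hmpos n).le]
    have hab : ∑ n : Fin N, a n * b n = ‖∑ n : Fin N, c n • F (A n)‖ := by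
      rw [← hφy, map_sum]
      refine Finset.sum_congr rfl fun n _ => ?_
      rw [_root_.map_smul, smul_eq_mul, ha, hb]
      field_simp [(hsm n).ne']
    calc ‖∑ n : Fin N, c n • F (A n)‖ = ∑ n : Fin N, a n * b n := hab.symm
      _ = ∫ ω, (∑ n : Fin N, a n * γ n.val ω) * (∑ n : Fin N, b n * γ n.val ω) ∂P :=
          (gseq_expand hγ N a b).symm
      _ ≤ Real.sqrt (∫ ω, (∑ n : Fin N, a n * γ n.val ω) * (∑ n : Fin N, a n * γ n.val ω) ∂P)
            * Real.sqrt (∫ ω, (∑ n : Fin N, b n * γ n.val ω) * (∑ n : Fin N, b n * γ n.val ω) ∂P) :=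
          my_CS P _ _ (gseq_int_sum_mul hγ N a a) (gseq_int_sum_mul hγ N b b)
            (gseq_int_sum_mul hγ N a b)
      _ = Real.sqrt (∑ n : Fin N, a n * a n) * Real.sqrt (∑ n : Fin N, b n * b n) := by
          rw [gseq_expand hγ N a a, gseq_expand hγ N b b]
      _ ≤ Real.sqrt (∑ n : Fin N, |c n| ^ 2 * (μ (A n)).toReal) * V := by
          rw [haa]
          refine mul_le_mul_of_nonneg_left ?_ (Real.sqrt_nonneg _)
          calc Real.sqrt (∑ n : Fin N, b n * b n) ≤ Real.sqrt (V ^ 2) := Real.sqrt_le_sqrt hbb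
            _ = V := Real.sqrt_sq hVnonneg
  exact ⟨main, gammaVar P γ μ ⇑F, hVnonneg, fun N A hA hd hp c => by
    rw [mul_comm]; exact main N A hA hd hp c⟩
end

section
/- Let (S,Σ) be a measurable space and X a Banach space. The set V^r(μ;X) of all countably additive vector measures F: Σ → X of bounded randomised variation is a vector space under setwise operations, ‖·‖_{V^r(μ;X)} is a norm on it, and V^r(μ;X) is complete with respect to this norm, i.e. it is a Banach space. -/
open MeasureTheory ProbabilityTheory Function
open scoped ENNReal NNReal

noncomputable section

/-- `r` is a Rademacher sequence on `(Ω, P)`: independent random variables taking the values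
`1` and `-1` each with probability `1/2`. -/
def IsRademacherSeq {Ω : Type*} [MeasurableSpace Ω] (P : Measure Ω) (r : ℕ → Ω → ℝ) : Prop :=
  (∀ n, Measurable (r n)) ∧ ProbabilityTheory.iIndepFun r P ∧
    ∀ n, Measure.map (r n) P =
      (1 / 2 : ENNReal) • Measure.dirac (1 : ℝ) + (1 / 2 : ENNReal) • Measure.dirac (-1 : ℝ)

/-- The set of quantities `(𝔼 ‖∑ r_n F(A_n)‖²)^{1/2}`, taken over all finite collections of
disjoint measurable sets; its supremum is the randomised variation of `F`. -/
def randVarSet {S : Type*} [MeasurableSpace S] {X : Type*} [NormedAddCommGroup X]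
    [NormedSpace ℝ X] {Ω : Type*} [MeasurableSpace Ω] (P : Measure Ω) (r : ℕ → Ω → ℝ)
    (F : Set S → X) : Set ℝ :=
  { v | ∃ (N : ℕ) (A : Fin N → Set S), (∀ n, MeasurableSet (A n)) ∧
      Pairwise (Disjoint on A) ∧
      v = Real.sqrt (∫ ω, ‖∑ n : Fin N, r n ω • F (A n)‖ ^ 2 ∂P) }

/-- `F` is of bounded randomised variation. -/
def HasBoundedRandVariation {S : Type*} [MeasurableSpace S] {X : Type*} [NormedAddCommGroup X]
    [NormedSpace ℝ X] {Ω : Type*} [MeasurableSpace Ω] (P : Measure Ω) (r : ℕ → Ω → ℝ)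
    (F : Set S → X) : Prop :=
  BddAbove (randVarSet P r F)

/-- The randomised variation norm `‖F‖_{V^r}`. -/
def randVar {S : Type*} [MeasurableSpace S] {X : Type*} [NormedAddCommGroup X]
    [NormedSpace ℝ X] {Ω : Type*} [MeasurableSpace Ω] (P : Measure Ω) (r : ℕ → Ω → ℝ)
    (F : Set S → X) : ℝ :=
  sSup (randVarSet P r F)

end


noncomputable section

namespace RandVarAux
open Filter

variable {Ω : Type*} [MeasurableSpace Ω] (P : Measure Ω) (r : ℕ → Ω → ℝ)
  {X : Type*} [NormedAddCommGroup X] [NormedSpace ℝ X]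

/-- The basic quantity. -/
def Q {N : ℕ} (v : Fin N → X) : ℝ :=
  Real.sqrt (∫ ω, ‖∑ n : Fin N, r n ω • v n‖ ^ 2 ∂P)

variable {P r}

lemma abs_ae (hr : IsRademacherSeq P r) (k : ℕ) : ∀ᵐ ω ∂P, |r k ω| = 1 := by
  have hm := hr.1 k
  have hmap := hr.2.2 k
  have hms : MeasurableSet (({1, -1} : Set ℝ)ᶜ) := (by measurability)
  have h0 : P ((r k) ⁻¹' ({1, -1} : Set ℝ)ᶜ) = 0 := by
    rw [← Measure.map_apply hm hms, hmap]
    norm_num [Measure.dirac_apply' _ hms, Set.indicator_apply]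
  have : ∀ᵐ ω ∂P, r k ω ∈ ({1, -1} : Set ℝ) := by
    rw [MeasureTheory.ae_iff]
    exact h0
  filter_upwards [this] with ω hω
  rcases hω with h | h
  · simp [h]
  · rw [Set.mem_singleton_iff] at h
    simp [h]

variable [IsProbabilityMeasure P]

lemma memLp_term (hm : ∀ n, Measurable (r n)) (h1 : ∀ n, ∀ᵐ ω ∂P, |r n ω| = 1)
    (k : ℕ) (x : X) : MemLp (fun ω => r k ω • x) 2 P := by
  refine MemLp.of_bound (((hm k).aestronglyMeasurable).smul aestronglyMeasurable_const) ‖x‖ ?_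
  filter_upwards [h1 k] with ω hω
  rw [norm_smul, Real.norm_eq_abs, hω, one_mul]

lemma memLp_sum (hm : ∀ n, Measurable (r n)) (h1 : ∀ n, ∀ᵐ ω ∂P, |r n ω| = 1)
    {N : ℕ} (v : Fin N → X) :
    MemLp (fun ω => ∑ n : Fin N, r (n : ℕ) ω • v n) 2 P :=
  memLp_finset_sum Finset.univ (fun n _ => memLp_term hm h1 (n : ℕ) (v n))

lemma Q_eq_toReal_eLpNorm (hm : ∀ n, Measurable (r n)) (h1 : ∀ n, ∀ᵐ ω ∂P, |r n ω| = 1)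
    {N : ℕ} (v : Fin N → X) :
    Q P r v = (eLpNorm (fun ω => ∑ n : Fin N, r (n : ℕ) ω • v n) 2 P).toReal := by
  rw [(memLp_sum hm h1 v).eLpNorm_eq_integral_rpow_norm two_ne_zero ENNReal.ofNat_ne_top,
    ENNReal.toReal_ofReal (Real.rpow_nonneg (integral_nonneg fun ω => by positivity) _)]
  have h2 : (2 : ℝ≥0∞).toReal = 2 := by norm_num
  rw [Q, Real.sqrt_eq_rpow]
  congr 1
  · apply integral_congr_ae
    filter_upwards with ω
    rw [h2, ← Real.rpow_natCast ‖_‖ 2]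
    norm_num
  · rw [h2]; norm_num

lemma Q_nonneg {N : ℕ} (v : Fin N → X) : 0 ≤ Q P r v := Real.sqrt_nonneg _

lemma Q_add_le (hm : ∀ n, Measurable (r n)) (h1 : ∀ n, ∀ᵐ ω ∂P, |r n ω| = 1)
    {N : ℕ} (v w : Fin N → X) :
    Q P r (fun n => v n + w n) ≤ Q P r v + Q P r w := by
  rw [Q_eq_toReal_eLpNorm hm h1, Q_eq_toReal_eLpNorm hm h1, Q_eq_toReal_eLpNorm hm h1]
  have hfg : (fun ω => ∑ n : Fin N, r (n : ℕ) ω • (v n + w n)) =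
      (fun ω => ∑ n : Fin N, r (n : ℕ) ω • v n) + fun ω => ∑ n : Fin N, r (n : ℕ) ω • w n := by
    funext ω
    simp [smul_add, Finset.sum_add_distrib]
  rw [hfg, ← ENNReal.toReal_add (memLp_sum hm h1 v).2.ne (memLp_sum hm h1 w).2.ne]
  refine ENNReal.toReal_mono (by
      exact ENNReal.add_ne_top.2 ⟨(memLp_sum hm h1 v).2.ne, (memLp_sum hm h1 w).2.ne⟩) ?_
  exact eLpNorm_add_le (memLp_sum hm h1 v).1 (memLp_sum hm h1 w).1 one_le_two

lemma Q_smul (c : ℝ) {N : ℕ} (v : Fin N → X) :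
    Q P r (fun n => c • v n) = |c| * Q P r v := by
  have h : ∀ ω, ‖∑ n : Fin N, r (n : ℕ) ω • c • v n‖ ^ 2 =
      |c| ^ 2 * ‖∑ n : Fin N, r (n : ℕ) ω • v n‖ ^ 2 := by
    intro ω
    rw [← mul_pow, ← Real.norm_eq_abs, ← norm_smul, Finset.smul_sum]
    congr 2
    exact Finset.sum_congr rfl fun n _ => (smul_comm _ _ _)
  rw [Q, Q]
  simp_rw [h]
  rw [integral_const_mul, Real.sqrt_mul (by positivity), Real.sqrt_sq (abs_nonneg c)]

lemma Q_neg {N : ℕ} (v : Fin N → X) : Q P r (fun n => -(v n)) = Q P r v := by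
  have := Q_smul (P := P) (r := r) (-1) v
  simpa using this

lemma Q_single (h1 : ∀ n, ∀ᵐ ω ∂P, |r n ω| = 1) (v : Fin 1 → X) :
    Q P r v = ‖v 0‖ := by
  rw [Q]
  have hint : ∫ ω, ‖∑ n : Fin 1, r (n : ℕ) ω • v n‖ ^ 2 ∂P = ‖v 0‖ ^ 2 := by
    rw [show ∫ ω, ‖∑ n : Fin 1, r (n : ℕ) ω • v n‖ ^ 2 ∂P = ∫ ω, ‖v 0‖ ^ 2 ∂P from ?_,
      integral_const]
    · simp
    · apply integral_congr_ae
      filter_upwards [h1 0] with ω hω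
      rw [Fin.sum_univ_one, norm_smul, Real.norm_eq_abs]
      norm_num [hω]
  rw [hint, Real.sqrt_sq (norm_nonneg _)]

set_option maxHeartbeats 1000000 in
lemma Q_le_sum (hm : ∀ n, Measurable (r n)) (h1 : ∀ n, ∀ᵐ ω ∂P, |r n ω| = 1)
    {N : ℕ} (v : Fin N → X) :
    Q P r v ≤ ∑ n : Fin N, ‖v n‖ := by
  rw [Q_eq_toReal_eLpNorm hm h1]
  have hterm : ∀ n : Fin N, eLpNorm (fun ω => r (n : ℕ) ω • v n) 2 P
      = ENNReal.ofReal ‖v n‖ := by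
    intro n
    have heq : eLpNorm (fun ω => r (n : ℕ) ω • v n) 2 P
        = eLpNorm (fun _ : Ω => v n) 2 P := by
      refine eLpNorm_congr_norm_ae ?_
      filter_upwards [h1 (n : ℕ)] with ω hω
      rw [norm_smul, Real.norm_eq_abs, hω, one_mul]
    rw [heq, eLpNorm_const _ two_ne_zero (IsProbabilityMeasure.ne_zero P)]
    simp only [measure_univ, ENNReal.one_rpow, mul_one]
    exact (ofReal_norm _).symm
  have hne : (∑ n : Fin N, eLpNorm (fun ω => r (n : ℕ) ω • v n) 2 P) ≠ ⊤ := by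
    rw [← lt_top_iff_ne_top]
    refine ENNReal.sum_lt_top.2 fun n _ => ?_
    rw [hterm n]
    exact ENNReal.ofReal_lt_top
  have hfun : (fun ω => ∑ n : Fin N, r (n : ℕ) ω • v n)
      = ∑ n : Fin N, (fun ω => r (n : ℕ) ω • v n) := by
    funext ω
    simp [Finset.sum_apply]
  have hle : eLpNorm (fun ω => ∑ n : Fin N, r (n : ℕ) ω • v n) 2 P
      ≤ ∑ n : Fin N, eLpNorm (fun ω => r (n : ℕ) ω • v n) 2 P := by
    rw [hfun]
    exact eLpNorm_sum_le (fun n _ => (memLp_term hm h1 (n : ℕ) (v n)).1) one_le_two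
  refine le_trans (ENNReal.toReal_mono hne hle) (le_of_eq ?_)
  rw [ENNReal.toReal_sum (fun n _ => by rw [hterm n]; exact ENNReal.ofReal_ne_top)]
  exact Finset.sum_congr rfl fun n _ => by rw [hterm n, ENNReal.toReal_ofReal (norm_nonneg _)]

lemma Q_lipschitz (hm : ∀ n, Measurable (r n)) (h1 : ∀ n, ∀ᵐ ω ∂P, |r n ω| = 1)
    {N : ℕ} (v w : Fin N → X) :
    |Q P r v - Q P r w| ≤ ∑ n : Fin N, ‖v n - w n‖ := by
  rw [abs_sub_le_iff]
  constructor
  · have h := Q_add_le hm h1 (fun n => v n - w n) w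
    simp only [sub_add_cancel] at h
    have := Q_le_sum hm h1 (fun n => v n - w n)
    linarith
  · have h := Q_add_le hm h1 (fun n => w n - v n) v
    simp only [sub_add_cancel] at h
    have h2 := Q_le_sum hm h1 (fun n => w n - v n)
    have h3 : ∑ n : Fin N, ‖w n - v n‖ = ∑ n : Fin N, ‖v n - w n‖ :=
      Finset.sum_congr rfl fun n _ => norm_sub_rev _ _
    linarith [h3 ▸ h2]

lemma Q_tendsto (hm : ∀ n, Measurable (r n)) (h1 : ∀ n, ∀ᵐ ω ∂P, |r n ω| = 1)
    {N : ℕ} {v : ℕ → Fin N → X} {w : Fin N → X}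
    (h : ∀ k, Tendsto (fun m => v m k) atTop (nhds (w k))) :
    Tendsto (fun m => Q P r (v m)) atTop (nhds (Q P r w)) := by
  rw [tendsto_iff_dist_tendsto_zero]
  refine squeeze_zero (g := fun m => ∑ k : Fin N, ‖v m k - w k‖) (fun m => dist_nonneg)
    (fun m => ?_) ?_
  · exact Real.dist_eq _ _ ▸ Q_lipschitz hm h1 (v m) w
  · have : Tendsto (fun m => ∑ k : Fin N, ‖v m k - w k‖) atTop (nhds (∑ k : Fin N, (0:ℝ))) := by
      refine tendsto_finset_sum _ fun k _ => ?_
      exact tendsto_iff_norm_sub_tendsto_zero.mp (h k)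
    simpa using this

end RandVarAux

end

/-- The space `V^r(μ;X)` of countably additive vector measures of bounded
randomised variation is a vector space under setwise operations, the randomised variation is
a norm on it, and it is complete with respect to this norm, i.e. it is a Banach space. -/
theorem randomisedVariation_banachSpace
    {S : Type*} [MeasurableSpace S] {X : Type*} [NormedAddCommGroup X] [NormedSpace ℝ X]
    [CompleteSpace X]
    {Ω : Type*} [MeasurableSpace Ω] (P : Measure Ω) [IsProbabilityMeasure P]
    (r : ℕ → Ω → ℝ) (hr : IsRademacherSeq P r) :
    -- `V^r(μ;X)` is closed under the vector space operations (setwise operations):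
    ((0 : VectorMeasure S X) ∈ {F : VectorMeasure S X | HasBoundedRandVariation P r ⇑F}) ∧
    (∀ F G : VectorMeasure S X, HasBoundedRandVariation P r ⇑F →
      HasBoundedRandVariation P r ⇑G → HasBoundedRandVariation P r ⇑(F + G)) ∧
    (∀ (c : ℝ) (F : VectorMeasure S X), HasBoundedRandVariation P r ⇑F →
      HasBoundedRandVariation P r ⇑(c • F)) ∧
    -- `‖·‖_{V^r(μ;X)}` is a norm on `V^r(μ;X)`:
    (randVar P r ⇑(0 : VectorMeasure S X) = 0) ∧
    (∀ F : VectorMeasure S X, HasBoundedRandVariation P r ⇑F →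
      randVar P r ⇑F = 0 → F = 0) ∧
    (∀ F : VectorMeasure S X, HasBoundedRandVariation P r ⇑F → 0 ≤ randVar P r ⇑F) ∧
    (∀ (c : ℝ) (F : VectorMeasure S X), HasBoundedRandVariation P r ⇑F →
      randVar P r ⇑(c • F) = |c| * randVar P r ⇑F) ∧
    (∀ F G : VectorMeasure S X, HasBoundedRandVariation P r ⇑F →
      HasBoundedRandVariation P r ⇑G →
      randVar P r ⇑(F + G) ≤ randVar P r ⇑F + randVar P r ⇑G) ∧
    -- completeness: every Cauchy sequence in the randomised variation norm converges:
    (∀ F : ℕ → VectorMeasure S X, (∀ n, HasBoundedRandVariation P r ⇑(F n)) →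
      (∀ ε : ℝ, 0 < ε → ∃ N : ℕ, ∀ m ≥ N, ∀ n ≥ N, randVar P r ⇑(F m - F n) < ε) →
      ∃ G : VectorMeasure S X, HasBoundedRandVariation P r ⇑G ∧
        ∀ ε : ℝ, 0 < ε → ∃ N : ℕ, ∀ n ≥ N, randVar P r ⇑(F n - G) < ε) := by
  classical
  have hmr : ∀ n, Measurable (r n) := hr.1
  have h1 : ∀ n, ∀ᵐ ω ∂P, |r n ω| = 1 := fun n => RandVarAux.abs_ae hr n
  -- basic membership facts
  have hzero_mem : ∀ F : Set S → X, (0 : ℝ) ∈ randVarSet P r F := by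
    intro F
    refine ⟨0, Fin.elim0, fun n => n.elim0, ?_, ?_⟩
    · intro i
      exact i.elim0
    · simp
  have hmemQ : ∀ (F : Set S → X) (N : ℕ) (A : Fin N → Set S),
      (∀ n, MeasurableSet (A n)) → Pairwise (Disjoint on A) →
      RandVarAux.Q P r (fun n => F (A n)) ∈ randVarSet P r F :=
    fun F N A hA hd => ⟨N, A, hA, hd, rfl⟩
  have hnorm_mem : ∀ (F : Set S → X) (A : Set S), MeasurableSet A →
      ‖F A‖ ∈ randVarSet P r F := by
    intro F A hA
    refine ⟨1, fun _ => A, fun _ => hA, Subsingleton.pairwise, ?_⟩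
    show ‖F A‖ = RandVarAux.Q P r (fun _ : Fin 1 => F A)
    rw [RandVarAux.Q_single h1]
  have hQle : ∀ (F : Set S → X), HasBoundedRandVariation P r F →
      ∀ (N : ℕ) (A : Fin N → Set S), (∀ n, MeasurableSet (A n)) →
      Pairwise (Disjoint on A) →
      RandVarAux.Q P r (fun n => F (A n)) ≤ randVar P r F :=
    fun F hF N A hA hd => le_csSup hF (hmemQ F N A hA hd)
  -- the zero measure
  have hset0 : randVarSet P r ⇑(0 : VectorMeasure S X) = {0} := by
    refine Set.eq_singleton_iff_unique_mem.mpr ⟨hzero_mem _, ?_⟩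
    rintro v ⟨N, A, hA, hd, rfl⟩
    simp [VectorMeasure.zero_apply]
  have hzero_bdd : HasBoundedRandVariation P r ⇑(0 : VectorMeasure S X) := by
    rw [HasBoundedRandVariation, hset0]
    exact bddAbove_singleton
  have hzero_var : randVar P r ⇑(0 : VectorMeasure S X) = 0 := by
    rw [randVar, hset0, csSup_singleton]
  -- addition
  have hadd : ∀ F G : VectorMeasure S X, HasBoundedRandVariation P r ⇑F →
      HasBoundedRandVariation P r ⇑G →
      HasBoundedRandVariation P r ⇑(F + G) ∧
        randVar P r ⇑(F + G) ≤ randVar P r ⇑F + randVar P r ⇑G := by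
    intro F G hF hG
    have hub : ∀ v ∈ randVarSet P r ⇑(F + G), v ≤ randVar P r ⇑F + randVar P r ⇑G := by
      rintro v ⟨N, A, hA, hd, rfl⟩
      show RandVarAux.Q P r (fun n => (F + G) (A n)) ≤ _
      have e : (fun n : Fin N => (F + G) (A n)) = fun n => F (A n) + G (A n) := by
        funext n
        exact VectorMeasure.add_apply F G (A n)
      rw [e]
      exact le_trans (RandVarAux.Q_add_le hmr h1 _ _)
        (add_le_add (hQle ⇑F hF N A hA hd) (hQle ⇑G hG N A hA hd))
    exact ⟨⟨_, fun v hv => hub v hv⟩, csSup_le ⟨0, hzero_mem _⟩ hub⟩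
  -- scalar multiplication
  have hsmul : ∀ (c : ℝ) (F : VectorMeasure S X), HasBoundedRandVariation P r ⇑F →
      HasBoundedRandVariation P r ⇑(c • F) ∧
        randVar P r ⇑(c • F) ≤ |c| * randVar P r ⇑F := by
    intro c F hF
    have hub : ∀ v ∈ randVarSet P r ⇑(c • F), v ≤ |c| * randVar P r ⇑F := by
      rintro v ⟨N, A, hA, hd, rfl⟩
      show RandVarAux.Q P r (fun n => (c • F) (A n)) ≤ _
      have e : (fun n : Fin N => (c • F) (A n)) = fun n => c • F (A n) := by
        funext n
        rfl
      rw [e, RandVarAux.Q_smul]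
      exact mul_le_mul_of_nonneg_left (hQle ⇑F hF N A hA hd) (abs_nonneg c)
    exact ⟨⟨_, fun v hv => hub v hv⟩, csSup_le ⟨0, hzero_mem _⟩ hub⟩
  -- homogeneity (exact)
  have hsmul_eq : ∀ (c : ℝ) (F : VectorMeasure S X), HasBoundedRandVariation P r ⇑F →
      randVar P r ⇑(c • F) = |c| * randVar P r ⇑F := by
    intro c F hF
    rcases eq_or_ne c 0 with hc | hc
    · subst hc
      have e : ⇑((0 : ℝ) • F) = ⇑(0 : VectorMeasure S X) := by
        funext A
        simp [VectorMeasure.smul_apply]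
      rw [e, hzero_var, abs_zero, zero_mul]
    · refine le_antisymm (hsmul c F hF).2 ?_
      have h2 : randVar P r ⇑F ≤ |c|⁻¹ * randVar P r ⇑(c • F) := by
        refine csSup_le ⟨0, hzero_mem _⟩ ?_
        rintro v ⟨N, A, hA, hd, rfl⟩
        show RandVarAux.Q P r (fun n => F (A n)) ≤ _
        have e : (fun n : Fin N => F (A n)) = fun n => c⁻¹ • (c • F) (A n) := by
          funext n
          rw [VectorMeasure.smul_apply, inv_smul_smul₀ hc]
        rw [e, RandVarAux.Q_smul, abs_inv]
        refine mul_le_mul_of_nonneg_left ?_ (by positivity)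
        exact le_csSup (hsmul c F hF).1 (hmemQ ⇑(c • F) N A hA hd)
      calc |c| * randVar P r ⇑F ≤ |c| * (|c|⁻¹ * randVar P r ⇑(c • F)) :=
            mul_le_mul_of_nonneg_left h2 (abs_nonneg c)
        _ = randVar P r ⇑(c • F) := by
            rw [← mul_assoc, mul_inv_cancel₀ (abs_ne_zero.2 hc), one_mul]
  refine ⟨hzero_bdd, fun F G hF hG => (hadd F G hF hG).1, fun c F hF => (hsmul c F hF).1,
    hzero_var, ?_, fun F hF => le_csSup hF (hzero_mem _), hsmul_eq,
    fun F G hF hG => (hadd F G hF hG).2, ?_⟩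
  -- definiteness of the norm
  · intro F hF h0
    refine VectorMeasure.ext fun A hA => ?_
    have h := le_csSup hF (hnorm_mem ⇑F A hA)
    rw [randVar] at h0
    rw [h0] at h
    rw [VectorMeasure.zero_apply]
    exact norm_le_zero_iff.mp h
  -- completeness
  · intro F hFb hFc
    have hsubb : ∀ m n : ℕ, HasBoundedRandVariation P r ⇑(F m - F n) := by
      intro m n
      have h := (hadd (F m) ((-1 : ℝ) • F n) (hFb m) ((hsmul (-1) (F n) (hFb n)).1)).1
      have e : F m - F n = F m + (-1 : ℝ) • F n := by
        rw [sub_eq_add_neg, neg_one_smul]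
      rw [e]
      exact h
    have hpt : ∀ m n (A : Set S), MeasurableSet A →
        ‖F m A - F n A‖ ≤ randVar P r ⇑(F m - F n) := by
      intro m n A hA
      have h := le_csSup (hsubb m n) (hnorm_mem ⇑(F m - F n) A hA)
      rwa [VectorMeasure.sub_apply] at h
    have hlim : ∀ A : Set S, ∃ x : X, Filter.Tendsto (fun n => F n A) Filter.atTop (nhds x) := by
      intro A
      by_cases hA : MeasurableSet A
      · apply cauchySeq_tendsto_of_complete
        rw [Metric.cauchySeq_iff]
        intro ε hε
        obtain ⟨N, hN⟩ := hFc ε hε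
        exact ⟨N, fun m hm n hn => by
          rw [dist_eq_norm]
          exact lt_of_le_of_lt (hpt m n A hA) (hN m hm n hn)⟩
      · refine ⟨0, ?_⟩
        have e : (fun n => F n A) = fun _ => (0 : X) :=
          funext fun n => (F n).not_measurable hA
        rw [e]
        exact tendsto_const_nhds
    choose g hg using hlim
    have hgnm : ∀ ⦃A : Set S⦄, ¬MeasurableSet A → g A = 0 := by
      intro A hA
      refine tendsto_nhds_unique (hg A) ?_
      have e : (fun n => F n A) = fun _ => (0 : X) :=
        funext fun n => (F n).not_measurable hA
      rw [e]
      exact tendsto_const_nhds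
    have hgempty : g ∅ = 0 := by
      refine tendsto_nhds_unique (hg ∅) ?_
      have e : (fun n => F n ∅) = fun _ => (0 : X) := funext fun n => (F n).empty
      rw [e]
      exact tendsto_const_nhds
    have hUnif : ∀ ε : ℝ, 0 < ε → ∃ N, ∀ n ≥ N, ∀ A : Set S, MeasurableSet A →
        ‖F n A - g A‖ ≤ ε := by
      intro ε hε
      obtain ⟨N, hN⟩ := hFc ε hε
      refine ⟨N, fun n hn A hA => ?_⟩
      have ht : Filter.Tendsto (fun m => ‖F n A - F m A‖) Filter.atTop
          (nhds ‖F n A - g A‖) := (tendsto_const_nhds.sub (hg A)).norm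
      refine le_of_tendsto ht ?_
      filter_upwards [Filter.eventually_ge_atTop N] with m hm
      exact le_of_lt (lt_of_le_of_lt (hpt n m A hA) (hN n hn m hm))
    have hFfin : ∀ (k : ℕ) (f : ℕ → Set S), (∀ i, MeasurableSet (f i)) →
        Pairwise (Disjoint on f) →
        ∀ s : Finset ℕ, F k (⋃ i ∈ s, f i) = ∑ i ∈ s, F k (f i) := by
      intro k f hfm hfd s
      refine Finset.induction_on s ?_ ?_
      · simp [VectorMeasure.empty]
      · intro a t hat ih
        have hdisj : Disjoint (f a) (⋃ i ∈ t, f i) :=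
          Set.disjoint_iUnion₂_right.2 fun i hi => hfd fun h => hat (h ▸ hi)
        have hm2 : MeasurableSet (⋃ i ∈ t, f i) :=
          MeasurableSet.biUnion t.countable_toSet fun i _ => hfm i
        rw [Finset.set_biUnion_insert]
        rw [VectorMeasure.of_union hdisj (hfm a) hm2, ih, Finset.sum_insert hat]
    have hgfin : ∀ (f : ℕ → Set S), (∀ i, MeasurableSet (f i)) →
        Pairwise (Disjoint on f) →
        ∀ s : Finset ℕ, g (⋃ i ∈ s, f i) = ∑ i ∈ s, g (f i) := by
      intro f hfm hfd s
      refine tendsto_nhds_unique (hg _) ?_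
      have e : (fun n => F n (⋃ i ∈ s, f i)) = fun n => ∑ i ∈ s, F n (f i) :=
        funext fun n => hFfin n f hfm hfd s
      rw [e]
      exact tendsto_finset_sum _ fun i _ => hg (f i)
    have hiUnion : ∀ f : ℕ → Set S, (∀ i, MeasurableSet (f i)) →
        Pairwise (Disjoint on f) →
        HasSum (fun i => g (f i)) (g (⋃ i, f i)) := by
      intro f hfm hfd
      refine Metric.tendsto_nhds.mpr fun ε hε => ?_
      obtain ⟨N₀, hN₀⟩ := hUnif (ε / 4) (by linarith)
      have hHS : HasSum (fun i => F N₀ (f i)) (F N₀ (⋃ i, f i)) := (F N₀).m_iUnion hfm hfd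
      have hev := Metric.tendsto_nhds.mp hHS (ε / 4) (by linarith)
      filter_upwards [hev] with s hs
      have hBmeas : MeasurableSet (⋃ i ∈ s, f i) :=
        MeasurableSet.biUnion s.countable_toSet fun i _ => hfm i
      have hUmeas : MeasurableSet (⋃ i, f i) := MeasurableSet.iUnion hfm
      have e1 : ∑ i ∈ s, g (f i) = g (⋃ i ∈ s, f i) := (hgfin f hfm hfd s).symm
      have e2 : ∑ i ∈ s, F N₀ (f i) = F N₀ (⋃ i ∈ s, f i) := (hFfin N₀ f hfm hfd s).symm
      have d1 : dist (∑ i ∈ s, g (f i)) (∑ i ∈ s, F N₀ (f i)) ≤ ε / 4 := by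
        rw [e1, e2, dist_comm, dist_eq_norm]
        exact hN₀ N₀ le_rfl _ hBmeas
      have d3 : dist (F N₀ (⋃ i, f i)) (g (⋃ i, f i)) ≤ ε / 4 := by
        rw [dist_eq_norm]
        exact hN₀ N₀ le_rfl _ hUmeas
      calc dist (∑ i ∈ s, g (f i)) (g (⋃ i, f i))
          ≤ dist (∑ i ∈ s, g (f i)) (∑ i ∈ s, F N₀ (f i))
            + dist (∑ i ∈ s, F N₀ (f i)) (F N₀ (⋃ i, f i))
            + dist (F N₀ (⋃ i, f i)) (g (⋃ i, f i)) := dist_triangle4 _ _ _ _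
        _ < ε := by linarith
    set Gv : VectorMeasure S X := ⟨g, hgempty, hgnm, hiUnion⟩ with hGvdef
    have hGvapp : ∀ A : Set S, Gv A = g A := fun A => rfl
    have hQunif : ∀ ε : ℝ, 0 < ε → ∃ N, ∀ n ≥ N,
        ∀ x ∈ randVarSet P r ⇑(F n - Gv), x ≤ ε := by
      intro ε hε
      obtain ⟨N, hN⟩ := hFc ε hε
      refine ⟨N, fun n hn x hx => ?_⟩
      obtain ⟨Nc, A, hA, hd, rfl⟩ := hx
      show RandVarAux.Q P r (fun k => (F n - Gv) (A k)) ≤ ε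
      have he : (fun k : Fin Nc => (F n - Gv) (A k)) = fun k => F n (A k) - g (A k) := by
        funext k
        rw [VectorMeasure.sub_apply, hGvapp]
      rw [he]
      have ht : Filter.Tendsto (fun m => RandVarAux.Q P r (fun k => F n (A k) - F m (A k)))
          Filter.atTop (nhds (RandVarAux.Q P r (fun k => F n (A k) - g (A k)))) :=
        RandVarAux.Q_tendsto hmr h1 fun k => tendsto_const_nhds.sub (hg (A k))
      refine le_of_tendsto ht ?_
      filter_upwards [Filter.eventually_ge_atTop N] with m hm
      have hmem : RandVarAux.Q P r (fun k => F n (A k) - F m (A k))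
          ∈ randVarSet P r ⇑(F n - F m) := by
        have h := hmemQ ⇑(F n - F m) Nc A hA hd
        have e : (fun k : Fin Nc => (F n - F m) (A k)) = fun k => F n (A k) - F m (A k) := by
          funext k
          rw [VectorMeasure.sub_apply]
        rwa [e] at h
      exact le_of_lt (lt_of_le_of_lt (le_csSup (hsubb n m) hmem) (hN n hn m hm))
    obtain ⟨N1, hN1⟩ := hQunif 1 one_pos
    have hGb : HasBoundedRandVariation P r ⇑Gv := by
      refine ⟨randVar P r ⇑(F N1) + 1, ?_⟩
      rintro x ⟨Nc, A, hA, hd, rfl⟩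
      show RandVarAux.Q P r (fun k => Gv (A k)) ≤ _
      have e : (fun k : Fin Nc => Gv (A k))
          = fun k => F N1 (A k) + -(F N1 (A k) - Gv (A k)) := by
        funext k
        rw [← sub_eq_add_neg, sub_sub_cancel]
      have hmem : RandVarAux.Q P r (fun k => F N1 (A k) - Gv (A k))
          ∈ randVarSet P r ⇑(F N1 - Gv) := by
        have h := hmemQ ⇑(F N1 - Gv) Nc A hA hd
        have e2 : (fun k : Fin Nc => (F N1 - Gv) (A k))
            = fun k => F N1 (A k) - Gv (A k) := by
          funext k
          rw [VectorMeasure.sub_apply]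
        rwa [e2] at h
      calc RandVarAux.Q P r (fun k => Gv (A k))
          = RandVarAux.Q P r (fun k => F N1 (A k) + -(F N1 (A k) - Gv (A k))) := by rw [← e]
        _ ≤ RandVarAux.Q P r (fun k => F N1 (A k))
            + RandVarAux.Q P r (fun k => -(F N1 (A k) - Gv (A k))) :=
            RandVarAux.Q_add_le hmr h1 _ _
        _ = RandVarAux.Q P r (fun k => F N1 (A k))
            + RandVarAux.Q P r (fun k => F N1 (A k) - Gv (A k)) := by
            rw [RandVarAux.Q_neg]
        _ ≤ randVar P r ⇑(F N1) + 1 :=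
            add_le_add (hQle ⇑(F N1) (hFb N1) Nc A hA hd) (hN1 N1 le_rfl _ hmem)
    refine ⟨Gv, hGb, ?_⟩
    intro ε hε
    obtain ⟨N, hN⟩ := hQunif (ε / 2) (half_pos hε)
    refine ⟨N, fun n hn => ?_⟩
    have h : randVar P r ⇑(F n - Gv) ≤ ε / 2 :=
      csSup_le ⟨0, hzero_mem _⟩ fun x hx => hN n hn x hx
    linarith
end

section
/- Let (S,Σ) be a measurable space, μ a probability measure on (S,Σ), and X a Banach space of type 2 with type-2 constant C. Then for every Bochner square-integrable function φ ∈ L²(μ;X), the formula F(A) := ∫_A φ dμ (Bochner integral), A ∈ Σ, defines a countably additive vector measure F: Σ → X of bounded γ-variation with respect to μ, and ‖F‖_{V_γ(μ;X)} ≤ C ‖φ‖_{L²(μ;X)}. -/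
open MeasureTheory ProbabilityTheory Function
open scoped ENNReal NNReal

section AuxProof

open MeasureTheory ProbabilityTheory Function
open scoped ENNReal NNReal

namespace GammaVarAux

/-! ### The second moment of the standard Gaussian -/

lemma integrable_sq_kernel : Integrable (fun x : ℝ => x ^ 2 * Real.exp (-(1/2) * x ^ 2)) := by
  have h := integrable_rpow_mul_exp_neg_mul_sq (b := 1/2) (by norm_num) (s := 2) (by norm_num)
  convert h using 2 with x
  rw [show ((2:ℝ)) = ((2:ℕ):ℝ) by norm_num, Real.rpow_natCast]

lemma integral_sq_kernel :
    ∫ x : ℝ, x ^ 2 * Real.exp (-(1/2) * x ^ 2) = Real.sqrt (2 * Real.pi) := by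
  set f : ℝ → ℝ := fun x => x ^ 2 * Real.exp (-(1/2) * x ^ 2) with hf
  have hint : Integrable f := integrable_sq_kernel
  have heven : ∫ x in Set.Iic (0:ℝ), f x = ∫ x in Set.Ioi (0:ℝ), f x := by
    rw [show (∫ x in Set.Iic (0:ℝ), f x) = ∫ x in Set.Iic (0:ℝ), f (-x) from
      setIntegral_congr_fun measurableSet_Iic (fun x _ => by simp [hf]),
      integral_comp_neg_Iic]
    norm_num
  have hsplit : (∫ x, f x) = 2 * ∫ x in Set.Ioi (0:ℝ), f x := by
    rw [← integral_add_compl measurableSet_Iic hint, Set.compl_Iic, heven]; ring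
  have hIoi : ∫ x in Set.Ioi (0:ℝ), f x
      = ((1:ℝ)/2) ^ (-((2:ℝ) + 1) / 2) * (1 / 2) * Real.Gamma (((2:ℝ) + 1) / 2) := by
    rw [← integral_rpow_mul_exp_neg_mul_rpow (by norm_num) (by norm_num) (by norm_num)]
    refine setIntegral_congr_fun measurableSet_Ioi (fun x hx => ?_)
    rw [hf]
    rw [show ((2:ℝ)) = ((2:ℕ):ℝ) by norm_num, Real.rpow_natCast]
  have hGamma : Real.Gamma (((2:ℝ) + 1) / 2) = (1/2) * Real.sqrt Real.pi := by
    rw [show ((2:ℝ) + 1)/2 = 1/2 + 1 by norm_num, Real.Gamma_add_one (by norm_num),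
      Real.Gamma_one_half_eq]
  have hpow : ((1:ℝ)/2) ^ (-((2:ℝ) + 1) / 2) = 2 * Real.sqrt 2 := by
    rw [show ((1:ℝ)/2) = 2⁻¹ by norm_num,
      Real.inv_rpow (by norm_num : (0:ℝ) ≤ 2), ← Real.rpow_neg (by norm_num : (0:ℝ) ≤ 2),
      show (-(-((2:ℝ) + 1) / 2)) = 1 + 1/2 by norm_num,
      Real.rpow_add (by norm_num : (0:ℝ) < 2), Real.rpow_one,
      ← Real.sqrt_eq_rpow]
  rw [hsplit, hIoi, hGamma, hpow]
  rw [Real.sqrt_mul (by norm_num : (0:ℝ) ≤ 2)]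
  ring

lemma gaussianReal_eq_withDensity :
    gaussianReal 0 1 = MeasureTheory.Measure.withDensity volume
      (fun x => ((Real.toNNReal (gaussianPDFReal 0 1 x) : ℝ≥0) : ℝ≥0∞)) := by
  rw [gaussianReal_of_var_ne_zero _ one_ne_zero]; rfl

lemma pdf01 (x : ℝ) : gaussianPDFReal 0 1 x
    = (Real.sqrt (2 * Real.pi))⁻¹ * Real.exp (-(1/2) * x ^ 2) := by
  simp only [gaussianPDFReal_def, NNReal.coe_one, mul_one, sub_zero]
  congr 1
  ring_nf

lemma smul_pdf (x : ℝ) : (Real.toNNReal (gaussianPDFReal 0 1 x)) • x ^ 2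
    = (Real.sqrt (2 * Real.pi))⁻¹ * (x ^ 2 * Real.exp (-(1/2) * x ^ 2)) := by
  rw [NNReal.smul_def, Real.coe_toNNReal _ (gaussianPDFReal_nonneg 0 1 x), pdf01]
  rw [smul_eq_mul]
  ring

lemma integral_sq_gaussianReal : ∫ x : ℝ, x ^ 2 ∂(gaussianReal 0 1) = 1 := by
  rw [gaussianReal_eq_withDensity,
    integral_withDensity_eq_integral_smul
      ((measurable_gaussianPDFReal 0 1).real_toNNReal) (fun x => x ^ 2)]
  rw [show (fun x : ℝ => (Real.toNNReal (gaussianPDFReal 0 1 x)) • x ^ 2)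
    = fun x : ℝ => (Real.sqrt (2 * Real.pi))⁻¹ * (x ^ 2 * Real.exp (-(1/2) * x ^ 2)) from
    funext smul_pdf, integral_const_mul, integral_sq_kernel]
  rw [inv_mul_cancel₀]
  positivity

lemma memℒp_two_id_gaussianReal : MemLp (fun x : ℝ => x) 2 (gaussianReal 0 1) := by
  rw [memLp_two_iff_integrable_sq (f := fun x : ℝ => x) aestronglyMeasurable_id]
  rw [gaussianReal_eq_withDensity]
  rw [integrable_withDensity_iff_integrable_smul ((measurable_gaussianPDFReal 0 1).real_toNNReal)]
  rw [show (fun x : ℝ => (Real.toNNReal (gaussianPDFReal 0 1 x)) • x ^ 2)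
    = fun x : ℝ => (Real.sqrt (2 * Real.pi))⁻¹ * (x ^ 2 * Real.exp (-(1/2) * x ^ 2)) from
    funext smul_pdf]
  exact Integrable.const_mul integrable_sq_kernel _

/-! ### Joint laws of independent sequences -/

variable {Ω : Type*} [MeasurableSpace Ω] {P : Measure Ω} [IsProbabilityMeasure P]

lemma map_tuple_eq_pi {f : ℕ → Ω → ℝ} (hm : ∀ n, Measurable (f n))
    (hi : iIndepFun f P) (N : ℕ) :
    Measure.map (fun ω (n : Fin N) => f n ω) P
      = Measure.pi (fun n : Fin N => Measure.map (f (n : ℕ)) P) := by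
  have hmt : Measurable (fun ω (n : Fin N) => f n ω) :=
    measurable_pi_lambda _ (fun n => hm n)
  haveI : ∀ n : Fin N, IsProbabilityMeasure (Measure.map (f (n : ℕ)) P) :=
    fun n => Measure.isProbabilityMeasure_map (hm _).aemeasurable
  refine (Measure.pi_eq (μ := fun n : Fin N => Measure.map (f (n : ℕ)) P)
    (fun s hs => ?_)).symm
  rw [Measure.map_apply hmt (MeasurableSet.univ_pi hs)]
  set t : ℕ → Set ℝ := fun i => if h : i < N then s ⟨i, h⟩ else Set.univ with ht
  have htm : ∀ i, MeasurableSet (t i) := by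
    intro i
    by_cases h : i < N
    · simp only [ht, dif_pos h]; exact hs _
    · simp only [ht, dif_neg h]; exact MeasurableSet.univ
  have hpre : (fun ω (n : Fin N) => f n ω) ⁻¹' (Set.univ.pi s)
      = ⋂ i ∈ Finset.image Fin.val (Finset.univ : Finset (Fin N)), f i ⁻¹' t i := by
    ext ω
    simp only [Set.mem_preimage, Set.mem_univ_pi, Set.mem_iInter, Finset.mem_image,
      Finset.mem_univ, true_and]
    constructor
    · rintro h i ⟨n, rfl⟩
      simp only [ht, dif_pos n.isLt, Set.mem_preimage, Fin.eta]
      exact h n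
    · intro h n
      have := h (n : ℕ) ⟨n, rfl⟩
      simpa only [ht, dif_pos n.isLt, Set.mem_preimage, Fin.eta] using this
  rw [hpre, hi.measure_inter_preimage_eq_mul _ (fun i _ => htm i),
    Finset.prod_image (fun a _ b _ h => Fin.val_injective h)]
  refine Finset.prod_congr rfl (fun n _ => ?_)
  rw [Measure.map_apply (hm n) (hs n)]
  congr 1
  simp only [ht, dif_pos n.isLt, Fin.eta]

lemma map_flip_eq {γ : ℕ → Ω → ℝ} (hγ : IsStdGaussianSeq P γ) {ε : ℕ → ℝ}
    (hε : ∀ n, ε n = 1 ∨ ε n = -1) (N : ℕ) :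
    Measure.map (fun ω (n : Fin N) => ε n * γ n ω) P
      = Measure.map (fun ω (n : Fin N) => γ n ω) P := by
  obtain ⟨hm, hi, hlaw⟩ := hγ
  have hm' : ∀ n, Measurable (fun ω => ε n * γ n ω) := fun n => (hm n).const_mul _
  have hi' : iIndepFun (fun n ω => ε n * γ n ω) P :=
    hi.comp (fun n y => ε n * y) (fun n => measurable_const_mul _)
  have hlaw' : ∀ n, Measure.map (fun ω => ε n * γ n ω) P = gaussianReal 0 1 := by
    intro n
    have hcomp : (fun ω => ε n * γ n ω) = (fun y => ε n * y) ∘ γ n := rfl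
    rw [hcomp, ← Measure.map_map (measurable_const_mul _) (hm n), hlaw n,
      gaussianReal_map_const_mul (ε n)]
    have h2 : (⟨ε n ^ 2, sq_nonneg _⟩ : ℝ≥0) * 1 = 1 := by
      rcases hε n with h | h <;> (ext; simp [h])
    rw [mul_zero]; exact congrArg (gaussianReal 0) h2
  rw [map_tuple_eq_pi hm' hi' N, map_tuple_eq_pi hm hi N]
  congr 1
  funext n
  rw [hlaw' n, hlaw n]

/-! ### Moments and integrability -/

variable {X : Type*} [NormedAddCommGroup X] [NormedSpace ℝ X]

lemma memℒp_two_gamma {γ : ℕ → Ω → ℝ} (hγ : IsStdGaussianSeq P γ) (n : ℕ) :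
    MemLp (γ n) 2 P := by
  have h0 : MemLp (fun x : ℝ => x) 2 (Measure.map (γ n) P) := by
    rw [hγ.2.2 n]; exact memℒp_two_id_gaussianReal
  exact (memLp_map_measure_iff aestronglyMeasurable_id (hγ.1 n).aemeasurable).mp h0

lemma integral_sq_gamma {γ : ℕ → Ω → ℝ} (hγ : IsStdGaussianSeq P γ) (n : ℕ) :
    ∫ ω, (γ n ω) ^ 2 ∂P = 1 := by
  have h := integral_map (μ := P) (f := fun y : ℝ => y ^ 2) (hγ.1 n).aemeasurable
    ((measurable_id.pow_const 2).aestronglyMeasurable)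
  rw [hγ.2.2 n] at h
  rw [← h, integral_sq_gaussianReal]

lemma rad_ae {r : ℕ → Ω → ℝ} (hr : IsRademacherSeq P r) :
    ∀ᵐ ω ∂P, ∀ n, r n ω = 1 ∨ r n ω = -1 := by
  rw [ae_all_iff]
  intro n
  have hs : MeasurableSet ({1, -1}ᶜ : Set ℝ) :=
    (measurableSet_singleton 1 |>.union (measurableSet_singleton (-1))).compl
  have h0 : P (r n ⁻¹' ({1, -1}ᶜ : Set ℝ)) = 0 := by
    have := Measure.map_apply (μ := P) (hr.1 n) hs
    rw [hr.2.2 n] at this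
    rw [← this]
    simp [Measure.dirac_apply' _ hs]
  refine measure_mono_null ?_ h0
  intro ω hω
  simp only [Set.mem_preimage, Set.mem_compl_iff, Set.mem_insert_iff, Set.mem_singleton_iff]
  tauto

lemma memℒp_two_rad {r : ℕ → Ω → ℝ} (hr : IsRademacherSeq P r) (n : ℕ) :
    MemLp (r n) 2 P := by
  refine (memLp_top_of_bound (hr.1 n).aestronglyMeasurable 1 ?_).mono_exponent le_top
  filter_upwards [rad_ae hr] with ω hω
  rcases hω n with h | h <;> simp [h]

lemma integrable_norm_sq_sum {N : ℕ} (g : ℕ → Ω → ℝ) (hg : ∀ i, MemLp (g i) 2 P)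
    (x : Fin N → X) :
    Integrable (fun ω => ‖∑ i : Fin N, g i ω • x i‖ ^ 2) P := by
  have hmem : MemLp (fun ω => ∑ i : Fin N, g i ω • x i) 2 P := by
    refine memLp_finset_sum Finset.univ (f := fun (i : Fin N) ω => g i ω • x i) ?_
    intro i _
    exact MemLp.smul (q := ⊤) (memLp_const (x i)) (hg i)
  exact (memLp_two_iff_integrable_sq_norm hmem.aestronglyMeasurable).mp hmem

/-! ### Gaussian type 2 -/

lemma gauss_type2
    {Ω' : Type*} [MeasurableSpace Ω'] {P' : Measure Ω'} [IsProbabilityMeasure P']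
    {γ : ℕ → Ω → ℝ} (hγ : IsStdGaussianSeq P γ)
    {r : ℕ → Ω' → ℝ} (hr : IsRademacherSeq P' r) {C : ℝ}
    (htype2 : ∀ (N : ℕ) (x : Fin N → X),
      Real.sqrt (∫ ω', ‖∑ n : Fin N, r n ω' • x n‖ ^ 2 ∂P') ≤
        C * Real.sqrt (∑ n : Fin N, ‖x n‖ ^ 2))
    (N : ℕ) (x : Fin N → X) :
    ∫ ω, ‖∑ n : Fin N, γ n ω • x n‖ ^ 2 ∂P ≤ C ^ 2 * ∑ n : Fin N, ‖x n‖ ^ 2 := by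
  set I := ∫ ω, ‖∑ n : Fin N, γ n ω • x n‖ ^ 2 ∂P with hI
  set g : Ω → Ω' → ℝ := fun ω ω' => ‖∑ n : Fin N, (r n ω' * γ n ω) • x n‖ ^ 2 with hg
  have hgmem : ∀ n, MemLp (γ n) 2 P := memℒp_two_gamma hγ
  have hrmem : ∀ n, MemLp (r n) 2 P' := memℒp_two_rad hr
  have hInt1 : ∀ c : ℕ → ℝ, Integrable (fun ω => ‖∑ n : Fin N, (c n * γ n ω) • x n‖ ^ 2) P := by
    intro c
    exact integrable_norm_sq_sum (fun n ω => c n * γ n ω) (fun n => (hgmem n).const_mul _) x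
  have hInt2 : ∀ y : Fin N → X, Integrable (fun ω' => ‖∑ n : Fin N, r n ω' • y n‖ ^ 2) P' :=
    fun y => integrable_norm_sq_sum r hrmem y
  have hG : Continuous (fun y : Fin N → ℝ => ‖∑ n : Fin N, y n • x n‖ ^ 2) := by
    refine (Continuous.norm ?_).pow 2
    exact continuous_finset_sum _ (fun n _ => (continuous_apply n).smul continuous_const)
  have h1 : ∀ ω', (∀ n, r n ω' = 1 ∨ r n ω' = -1) → ∫ ω, g ω ω' ∂P = I := by
    intro ω' hω'
    have hmt : Measurable (fun ω (n : Fin N) => r n ω' * γ n ω ) :=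
      measurable_pi_lambda _ (fun n => (hγ.1 n).const_mul _)
    have hmt' : Measurable (fun ω (n : Fin N) => γ n ω) :=
      measurable_pi_lambda _ (fun n => hγ.1 n)
    have e1 : ∫ ω, g ω ω' ∂P
        = ∫ y, ‖∑ n : Fin N, y n • x n‖ ^ 2
            ∂(Measure.map (fun ω (n : Fin N) => r n ω' * γ n ω) P) := by
      rw [integral_map hmt.aemeasurable hG.aestronglyMeasurable]
    have e2 : I = ∫ y, ‖∑ n : Fin N, y n • x n‖ ^ 2
        ∂(Measure.map (fun ω (n : Fin N) => γ n ω) P) := by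
      rw [integral_map hmt'.aemeasurable hG.aestronglyMeasurable]
    rw [e1, e2, map_flip_eq hγ (fun n => hω' n) N]
  have hsm : StronglyMeasurable (fun p : Ω' × Ω => ∑ n : Fin N, (r n p.1 * γ n p.2) • x n) := by
    refine Finset.stronglyMeasurable_fun_sum _ (fun n _ => ?_)
    exact (((hr.1 n).comp measurable_fst).mul
      ((hγ.1 n).comp measurable_snd)).stronglyMeasurable.smul_const _
  have hmeas : AEMeasurable (uncurry fun ω' ω => ENNReal.ofReal (g ω ω')) (P'.prod P) :=
    ((hsm.norm.measurable.pow_const 2).ennreal_ofReal).aemeasurable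
  have hIntSum : Integrable (fun ω => C ^ 2 * ∑ n : Fin N, (γ n ω) ^ 2 * ‖x n‖ ^ 2) P := by
    refine Integrable.const_mul ?_ _
    refine integrable_finset_sum _ (fun n _ => ?_)
    exact ((memLp_two_iff_integrable_sq (hgmem n).aestronglyMeasurable).mp (hgmem n)).mul_const _
  have key : ENNReal.ofReal I ≤ ENNReal.ofReal (C ^ 2 * ∑ n : Fin N, ‖x n‖ ^ 2) := by
    calc ENNReal.ofReal I = ∫⁻ _, ENNReal.ofReal I ∂P' := by
          rw [lintegral_const, measure_univ, mul_one]
    _ = ∫⁻ ω', ∫⁻ ω, ENNReal.ofReal (g ω ω') ∂P ∂P' := by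
          refine lintegral_congr_ae ?_
          filter_upwards [rad_ae hr] with ω' hω'
          rw [← h1 ω' hω', ofReal_integral_eq_lintegral_ofReal (hInt1 (fun n => r n ω'))
            (ae_of_all _ (fun ω => by positivity))]
    _ = ∫⁻ ω, ∫⁻ ω', ENNReal.ofReal (g ω ω') ∂P' ∂P := lintegral_lintegral_swap hmeas
    _ ≤ ∫⁻ ω, ENNReal.ofReal (C ^ 2 * ∑ n : Fin N, (γ n ω) ^ 2 * ‖x n‖ ^ 2) ∂P := by
          refine lintegral_mono (fun ω => ?_)
          have hg' : (fun ω' => ENNReal.ofReal (g ω ω'))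
              = fun ω' => ENNReal.ofReal (‖∑ n : Fin N, r n ω' • (γ n ω • x n)‖ ^ 2) := by
            funext ω'; rw [hg]; simp_rw [mul_smul]
          rw [hg', ← ofReal_integral_eq_lintegral_ofReal (hInt2 (fun n => γ n ω • x n))
            (ae_of_all _ (fun ω' => by positivity))]
          apply ENNReal.ofReal_le_ofReal
          have h := htype2 N (fun n => γ n ω • x n)
          have hnn : 0 ≤ ∫ ω', ‖∑ n : Fin N, r n ω' • (γ n ω • x n)‖ ^ 2 ∂P' :=
            integral_nonneg (fun _ => by positivity)
          have hsq := pow_le_pow_left₀ (Real.sqrt_nonneg _) h 2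
          rw [Real.sq_sqrt hnn, mul_pow, Real.sq_sqrt
            (Finset.sum_nonneg (fun n _ => by positivity))] at hsq
          calc ∫ ω', ‖∑ n : Fin N, r n ω' • (γ n ω • x n)‖ ^ 2 ∂P'
              ≤ C ^ 2 * ∑ n : Fin N, ‖γ n ω • x n‖ ^ 2 := hsq
          _ = C ^ 2 * ∑ n : Fin N, (γ n ω) ^ 2 * ‖x n‖ ^ 2 := by
              congr 1
              refine Finset.sum_congr rfl (fun n _ => ?_)
              rw [norm_smul, mul_pow, Real.norm_eq_abs, sq_abs]
    _ = ENNReal.ofReal (C ^ 2 * ∑ n : Fin N, ‖x n‖ ^ 2) := by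
          rw [← ofReal_integral_eq_lintegral_ofReal hIntSum
            (ae_of_all _ (fun ω => by positivity))]
          congr 1
          rw [integral_const_mul]
          congr 1
          rw [integral_finset_sum (μ := P) Finset.univ
            (f := fun (n : Fin N) (a : Ω) => γ (n : ℕ) a ^ 2 * ‖x n‖ ^ 2) (fun n _ =>
            ((memLp_two_iff_integrable_sq (hgmem n).aestronglyMeasurable).mp (hgmem n)).mul_const _)]
          refine Finset.sum_congr rfl (fun n _ => ?_)
          rw [integral_mul_const, integral_sq_gamma hγ n, one_mul]
  have hnnR : 0 ≤ C ^ 2 * ∑ n : Fin N, ‖x n‖ ^ 2 := by positivity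
  exact (ENNReal.ofReal_le_ofReal_iff hnnR).mp key

/-! ### Cauchy-Schwarz and the L² norm -/

section CS
variable {S : Type*} [MeasurableSpace S] {μ : Measure S} [IsFiniteMeasure μ]

lemma sq_norm_setIntegral_le {φ : S → X} (hφ : MemLp φ 2 μ) {A : Set S} :
    ‖∫ s in A, φ s ∂μ‖ ^ 2 ≤ (μ A).toReal * ∫ s in A, ‖φ s‖ ^ 2 ∂μ := by
  have h1 : ‖∫ s in A, φ s ∂μ‖ ≤ ∫ s in A, ‖φ s‖ ∂μ := norm_integral_le_integral_norm _
  have hres : MemLp φ (ENNReal.ofReal 2) (μ.restrict A) := by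
    rw [show ENNReal.ofReal 2 = 2 by norm_num]
    exact hφ.restrict A
  have hconst : MemLp (fun _ : S => (1 : ℝ)) (ENNReal.ofReal 2) (μ.restrict A) := by
    rw [show ENNReal.ofReal 2 = 2 by norm_num]
    exact memLp_const 1
  have h2 := integral_mul_norm_le_Lp_mul_Lq (μ := μ.restrict A)
    (⟨by norm_num, by norm_num, by norm_num⟩ : Real.HolderConjugate 2 2) hres.norm hconst
  simp only [norm_one, mul_one, Real.one_rpow, norm_norm] at h2
  rw [integral_const] at h2
  have h2' : ∫ s in A, ‖φ s‖ ∂μ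
      ≤ Real.sqrt (∫ s in A, ‖φ s‖ ^ 2 ∂μ) * Real.sqrt ((μ A).toReal) := by
    calc ∫ s in A, ‖φ s‖ ∂μ
        ≤ (∫ s in A, ‖φ s‖ ^ (2:ℝ) ∂μ) ^ ((1:ℝ)/2)
            * ((μ.restrict A Set.univ).toReal • (1:ℝ)) ^ ((1:ℝ)/2) := h2
    _ = Real.sqrt (∫ s in A, ‖φ s‖ ^ 2 ∂μ) * Real.sqrt ((μ A).toReal) := by
        rw [← Real.sqrt_eq_rpow, ← Real.sqrt_eq_rpow, Measure.restrict_apply_univ, smul_eq_mul,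
          mul_one]
        congr 2
        refine integral_congr_ae (ae_of_all _ (fun s => ?_))
        norm_num [Real.rpow_natCast]
  have hnn : (0:ℝ) ≤ ∫ s in A, ‖φ s‖ ∂μ := integral_nonneg (fun _ => norm_nonneg _)
  calc ‖∫ s in A, φ s ∂μ‖ ^ 2 ≤ (∫ s in A, ‖φ s‖ ∂μ) ^ 2 :=
        pow_le_pow_left₀ (norm_nonneg _) h1 2
  _ ≤ (Real.sqrt (∫ s in A, ‖φ s‖ ^ 2 ∂μ) * Real.sqrt ((μ A).toReal)) ^ 2 :=
        pow_le_pow_left₀ hnn h2' 2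
  _ = (μ A).toReal * ∫ s in A, ‖φ s‖ ^ 2 ∂μ := by
        rw [mul_pow, Real.sq_sqrt (integral_nonneg (fun _ => by positivity)),
          Real.sq_sqrt ENNReal.toReal_nonneg]
        ring

lemma Lp_norm_sq_eq (φ : Lp X 2 μ) : ‖φ‖ ^ 2 = ∫ s, ‖φ s‖ ^ 2 ∂μ := by
  have hmem : MemLp (⇑φ) 2 μ := Lp.memLp φ
  have hint : Integrable (fun s => ‖φ s‖ ^ 2) μ :=
    (memLp_two_iff_integrable_sq_norm hmem.aestronglyMeasurable).mp hmem
  have h1 : ENNReal.ofReal (∫ s, ‖φ s‖ ^ 2 ∂μ) = ∫⁻ s, (‖φ s‖₊ : ℝ≥0∞) ^ 2 ∂μ := by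
    rw [ofReal_integral_eq_lintegral_ofReal hint (ae_of_all _ (fun s => by positivity))]
    congr 1
    funext s
    rw [ENNReal.ofReal_pow (norm_nonneg _), ofReal_norm, enorm_eq_nnnorm]
  have h2 : (‖φ‖ : ℝ) ^ 2 = ((∫⁻ s, (‖φ s‖₊ : ℝ≥0∞) ^ 2 ∂μ)).toReal := by
    rw [Lp.norm_def, eLpNorm_eq_lintegral_rpow_enorm_toReal (by norm_num) (by norm_num),
      ← ENNReal.toReal_pow]
    simp only [enorm_eq_nnnorm]
    congr 1
    rw [show ((2:ℝ≥0∞).toReal) = (2:ℝ) by norm_num,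
      ← ENNReal.rpow_natCast ((∫⁻ s, (‖φ s‖₊ : ℝ≥0∞) ^ (2:ℝ) ∂μ) ^ ((1:ℝ)/2)) 2,
      ← ENNReal.rpow_mul, show ((1:ℝ)/2 * ((2:ℕ):ℝ)) = (1:ℝ) by norm_num, ENNReal.rpow_one]
    refine lintegral_congr (fun s => ?_)
    rw [← ENNReal.rpow_natCast (‖φ s‖₊ : ℝ≥0∞) 2, show (((2:ℕ):ℝ)) = (2:ℝ) by norm_num]
  rw [h2, ← h1, ENNReal.toReal_ofReal (integral_nonneg (fun _ => by positivity))]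

end CS

end GammaVarAux

end AuxProof

/-- Let `X` have type 2 with type-2 constant `C`. For every
`φ ∈ L²(μ;X)` the formula `F(A) := ∫_A φ dμ` defines a countably additive vector measure of
bounded `γ`-variation with respect to `μ`, and `‖F‖_{V_γ(μ;X)} ≤ C ‖φ‖_{L²(μ;X)}`. -/
theorem gammaVariation_of_type2
    {S : Type*} [MeasurableSpace S] {X : Type*} [NormedAddCommGroup X] [NormedSpace ℝ X]
    [CompleteSpace X]
    {Ω : Type*} [MeasurableSpace Ω] (P : Measure Ω) [IsProbabilityMeasure P]
    (γ : ℕ → Ω → ℝ) (hγ : IsStdGaussianSeq P γ)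
    {Ω' : Type*} [MeasurableSpace Ω'] (P' : Measure Ω') [IsProbabilityMeasure P']
    (r : ℕ → Ω' → ℝ) (hr : IsRademacherSeq P' r)
    (μ : Measure S) [IsProbabilityMeasure μ]
    -- `X` has type 2 with constant `C`:
    (C : ℝ)
    (htype2 : ∀ (N : ℕ) (x : Fin N → X),
      Real.sqrt (∫ ω', ‖∑ n : Fin N, r n ω' • x n‖ ^ 2 ∂P') ≤
        C * Real.sqrt (∑ n : Fin N, ‖x n‖ ^ 2))
    (φ : Lp X 2 μ) :
    ∃ F : VectorMeasure S X,
      (∀ A : Set S, MeasurableSet A → F A = ∫ s in A, φ s ∂μ) ∧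
      HasBoundedGammaVariation P γ μ ⇑F ∧
      gammaVar P γ μ ⇑F ≤ C * ‖φ‖ := by
  classical
  have hφmem : MemLp (⇑φ) 2 μ := Lp.memLp φ
  have hφint : Integrable (⇑φ) μ := hφmem.integrable one_le_two
  have hintsq : Integrable (fun s => ‖φ s‖ ^ 2) μ :=
    (memLp_two_iff_integrable_sq_norm hφmem.aestronglyMeasurable).mp hφmem
  set F : VectorMeasure S X := μ.withDensityᵥ ⇑φ with hFdef
  have hFA : ∀ A : Set S, MeasurableSet A → F A = ∫ s in A, φ s ∂μ :=
    fun A hA => withDensityᵥ_apply hφint hA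
  have hub : ∀ v ∈ gammaVarSet P γ μ ⇑F, v ≤ C * ‖φ‖ := by
    rintro v ⟨N, A, hAm, hAd, hApos, rfl⟩
    by_cases hC : 0 ≤ C
    · set x : Fin N → X :=
        fun n => (Real.sqrt ((μ (A n)).toReal))⁻¹ • (∫ s in A n, φ s ∂μ) with hx
      have hrw : ∀ ω : Ω, (∑ n : Fin N, (γ n ω / Real.sqrt ((μ (A n)).toReal)) • F (A n))
          = ∑ n : Fin N, γ n ω • x n := by
        intro ω
        refine Finset.sum_congr rfl (fun n _ => ?_)
        rw [hFA (A n) (hAm n), hx, div_eq_mul_inv, mul_smul]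
      have ht : ∀ n : Fin N, 0 < (μ (A n)).toReal :=
        fun n => ENNReal.toReal_pos (hApos n).ne' (measure_ne_top μ _)
      have hxn : ∀ n : Fin N, ‖x n‖ ^ 2 ≤ ∫ s in A n, ‖φ s‖ ^ 2 ∂μ := by
        intro n
        have hcs := GammaVarAux.sq_norm_setIntegral_le hφmem (A := A n)
        have hns : ‖x n‖ ^ 2 = ((μ (A n)).toReal)⁻¹ * ‖∫ s in A n, φ s ∂μ‖ ^ 2 := by
          rw [hx, norm_smul, Real.norm_eq_abs, abs_inv, abs_of_nonneg (Real.sqrt_nonneg _),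
            mul_pow, inv_pow, Real.sq_sqrt (le_of_lt (ht n))]
        rw [hns, inv_mul_le_iff₀ (ht n)]
        exact hcs
      have hmain := GammaVarAux.gauss_type2 hγ hr htype2 N x
      have hsum2 : ∑ n : Fin N, ‖x n‖ ^ 2 ≤ ‖φ‖ ^ 2 := by
        calc ∑ n : Fin N, ‖x n‖ ^ 2 ≤ ∑ n : Fin N, ∫ s in A n, ‖φ s‖ ^ 2 ∂μ :=
              Finset.sum_le_sum (fun n _ => hxn n)
        _ = ∫ s in ⋃ n : Fin N, A n, ‖φ s‖ ^ 2 ∂μ := by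
              rw [integral_iUnion hAm hAd hintsq.integrableOn, tsum_fintype]
        _ ≤ ∫ s, ‖φ s‖ ^ 2 ∂μ :=
              setIntegral_le_integral hintsq (ae_of_all _ (fun s => by positivity))
        _ = ‖φ‖ ^ 2 := (GammaVarAux.Lp_norm_sq_eq φ).symm
      have hle : ∫ ω, ‖∑ n : Fin N, (γ n ω / Real.sqrt ((μ (A n)).toReal)) • F (A n)‖ ^ 2 ∂P
          ≤ C ^ 2 * ‖φ‖ ^ 2 := by
        calc ∫ ω, ‖∑ n : Fin N, (γ n ω / Real.sqrt ((μ (A n)).toReal)) • F (A n)‖ ^ 2 ∂P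
            = ∫ ω, ‖∑ n : Fin N, γ n ω • x n‖ ^ 2 ∂P := by
              refine integral_congr_ae (ae_of_all _ (fun ω => ?_))
              dsimp only
              rw [hrw ω]
        _ ≤ C ^ 2 * ∑ n : Fin N, ‖x n‖ ^ 2 := hmain
        _ ≤ C ^ 2 * ‖φ‖ ^ 2 := mul_le_mul_of_nonneg_left hsum2 (sq_nonneg C)
      calc Real.sqrt (∫ ω, ‖∑ n : Fin N,
              (γ n ω / Real.sqrt ((μ (A n)).toReal)) • F (A n)‖ ^ 2 ∂P)
          ≤ Real.sqrt (C ^ 2 * ‖φ‖ ^ 2) := Real.sqrt_le_sqrt hle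
      _ = C * ‖φ‖ := by
          rw [show C ^ 2 * ‖φ‖ ^ 2 = (C * ‖φ‖) ^ 2 by ring,
            Real.sqrt_sq (mul_nonneg hC (norm_nonneg _))]
    · have hX0 : ∀ w : X, w = 0 := by
        intro w
        by_contra hw
        have h := htype2 1 (fun _ => w)
        have h0 : 0 ≤ C * Real.sqrt (∑ _n : Fin 1, ‖w‖ ^ 2) :=
          le_trans (Real.sqrt_nonneg _) h
        have hpos : 0 < Real.sqrt (∑ _n : Fin 1, ‖w‖ ^ 2) := by
          rw [Finset.sum_const, Finset.card_univ, Fintype.card_fin, one_smul]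
          refine Real.sqrt_pos.mpr ?_
          have : ‖w‖ ≠ 0 := fun h' => hw (norm_eq_zero.mp h')
          positivity
        nlinarith [not_le.mp hC]
      have hz : (fun ω => ‖∑ n : Fin N,
          (γ n ω / Real.sqrt ((μ (A n)).toReal)) • F (A n)‖ ^ 2) = fun _ => (0:ℝ) := by
        funext ω
        rw [Finset.sum_eq_zero (fun n _ => by rw [hX0 (F (A n)), smul_zero]), norm_zero]
        norm_num
      have hφ0 : ‖φ‖ = 0 := by
        rw [Lp.norm_def, eLpNorm_congr_ae (g := fun _ => (0:X))
          (Filter.Eventually.of_forall (fun s => hX0 (φ s)))]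
        simp [eLpNorm_zero']
      rw [hφ0, mul_zero, hz, integral_zero, Real.sqrt_zero]
  have h0mem : (0:ℝ) ∈ gammaVarSet P γ μ ⇑F := by
    refine ⟨0, fun n => n.elim0, fun n => n.elim0, fun i => i.elim0, fun n => n.elim0, ?_⟩
    simp
  exact ⟨F, hFA, ⟨C * ‖φ‖, fun v hv => hub v hv⟩, csSup_le ⟨0, h0mem⟩ hub⟩
end

section
/- Let (S,Σ) be a measurable space, (Ω,ℱ,ℙ) a probability space, X a Banach space, and G: Σ → L²(Ω;X) a countably additive vector measure such that (a) for every A ∈ Σ the random variable G(A) is symmetric (G(A) and −G(A) have the same distribution), and (b) for every finite collection of disjoint sets A_1,…,A_N ∈ Σ the X-valued random variables G(A_1),…,G(A_N) are independent. Then G is of bounded randomised variation and ‖G‖_{V^r} = ‖G(S)‖_{L²(Ω;X)}; in particular, for all disjoint A_1,…,A_N ∈ Σ, 𝔼̃ ‖Σ_{n=1}^N r̃_n G(A_n)‖²_{L²(Ω;X)} = 𝔼 ‖Σ_{n=1}^N G(A_n)(·)‖²_X ≤ 𝔼 ‖G(S)(·)‖²_X, where (r̃_n) is a Rademacher sequence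 on an auxiliary probability space. -/
open MeasureTheory ProbabilityTheory Function Set TopologicalSpace
open scoped ENNReal NNReal

section Aux

variable {Ω : Type*} [MeasurableSpace Ω] {P : Measure Ω}
variable {X : Type*} [NormedAddCommGroup X] [NormedSpace ℝ X]
  [MeasurableSpace X] [BorelSpace X]

omit [NormedSpace ℝ X] [MeasurableSpace X] [BorelSpace X] in
lemma aux_norm_sq_eq_integral (F : Lp X 2 P) :
    ‖F‖ ^ 2 = ∫ ω, ‖F ω‖ ^ 2 ∂P := by
  have hrp : ∀ a : ℝ, a ^ ((2 : ℝ≥0∞)).toReal = a ^ (2 : ℕ) := by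
    intro a
    rw [ENNReal.toReal_ofNat, ← Real.rpow_natCast a 2]
    norm_num
  have h := (Lp.memLp F).eLpNorm_eq_integral_rpow_norm two_ne_zero ENNReal.ofNat_ne_top
  simp_rw [hrp] at h
  have hnn : 0 ≤ ∫ ω, ‖F ω‖ ^ 2 ∂P := integral_nonneg fun ω => by positivity
  have hnorm : ‖F‖ = (∫ ω, ‖F ω‖ ^ 2 ∂P) ^ (((2 : ℝ≥0∞)).toReal)⁻¹ := by
    rw [Lp.norm_def, h, ENNReal.toReal_ofReal (Real.rpow_nonneg hnn _)]
  rw [hnorm, ENNReal.toReal_ofNat,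
    ← Real.rpow_natCast ((∫ ω, ‖F ω‖ ^ 2 ∂P) ^ ((2 : ℝ)⁻¹)) 2, ← Real.rpow_mul hnn]
  norm_num

omit [NormedSpace ℝ X] [MeasurableSpace X] [BorelSpace X] in
lemma aux_coeFn_sum {ι : Type*} (s : Finset ι) (F : ι → Lp X 2 P) :
    ⇑(∑ n ∈ s, F n) =ᵐ[P] fun ω => ∑ n ∈ s, (F n) ω := by
  classical
  induction s using Finset.induction with
  | empty => simpa [Pi.zero_def] using Lp.coeFn_zero (E := X) (p := 2) (μ := P)
  | @insert a s ha ih =>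
    filter_upwards [Lp.coeFn_add (F a) (∑ n ∈ s, F n), ih] with ω h1 h2
    rw [Finset.sum_insert ha, h1, Pi.add_apply, h2, Finset.sum_insert ha]

omit [NormedSpace ℝ X] [BorelSpace X] in
lemma aux_map_subtype_val_inj {s : Set X} (hs : MeasurableSet s) {μ ν : Measure s}
    (h : μ.map Subtype.val = ν.map Subtype.val) : μ = ν := by
  have he := MeasurableEmbedding.subtype_coe hs
  ext t ht
  have h2 : μ.map Subtype.val (Subtype.val '' t) = ν.map Subtype.val (Subtype.val '' t) := by
    rw [h]
  rwa [he.map_apply, he.map_apply, Set.preimage_image_eq t Subtype.val_injective] at h2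

omit [NormedSpace ℝ X] [BorelSpace X] in
lemma aux_iIndepFun_subtype_mk {ι : Type*} {f : ι → Ω → X} {K : ι → Set X}
    (hmem : ∀ i ω, f i ω ∈ K i)
    (hind : iIndepFun f P) :
    iIndepFun
      (fun i ω => (⟨f i ω, hmem i ω⟩ : K i)) P := by
  have e : ∀ i, MeasurableSpace.comap (fun ω => (⟨f i ω, hmem i ω⟩ : K i)) inferInstance
      = MeasurableSpace.comap (f i) ‹MeasurableSpace X› := by
    intro i
    rw [show (inferInstance : MeasurableSpace (K i))
      = MeasurableSpace.comap Subtype.val ‹MeasurableSpace X› from rfl,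
      MeasurableSpace.comap_comp]
    rfl
  simpa only [iIndepFun, Kernel.iIndepFun, e] using hind

omit [NormedSpace ℝ X] [BorelSpace X] in
lemma aux_indepFun_subtype_mk {f g : Ω → X} {K L : Set X}
    (hmemf : ∀ ω, f ω ∈ K) (hmemg : ∀ ω, g ω ∈ L)
    (hind : IndepFun f g P) :
    IndepFun (fun ω => (⟨f ω, hmemf ω⟩ : K)) (fun ω => (⟨g ω, hmemg ω⟩ : L)) P := by
  have e1 : MeasurableSpace.comap (fun ω => (⟨f ω, hmemf ω⟩ : K)) inferInstance
      = MeasurableSpace.comap f ‹MeasurableSpace X› := by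
    rw [show (inferInstance : MeasurableSpace K)
      = MeasurableSpace.comap Subtype.val ‹MeasurableSpace X› from rfl,
      MeasurableSpace.comap_comp]
    rfl
  have e2 : MeasurableSpace.comap (fun ω => (⟨g ω, hmemg ω⟩ : L)) inferInstance
      = MeasurableSpace.comap g ‹MeasurableSpace X› := by
    rw [show (inferInstance : MeasurableSpace L)
      = MeasurableSpace.comap Subtype.val ‹MeasurableSpace X› from rfl,
      MeasurableSpace.comap_comp]
    rfl
  simpa only [IndepFun, Kernel.IndepFun, e1, e2] using hind

variable [IsProbabilityMeasure P]

lemma aux_map_tuple_eq_pi {N : ℕ} {β : Fin N → Type*} [∀ n, MeasurableSpace (β n)]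
    {f : ∀ n, Ω → β n}
    (hf : ∀ n, Measurable (f n))
    (hind : iIndepFun f P) :
    P.map (fun ω n => f n ω) = Measure.pi (fun n => P.map (f n)) := by
  have hmeas : Measurable (fun ω n => f n ω) := measurable_pi_lambda _ hf
  haveI : ∀ n, IsProbabilityMeasure (P.map (f n)) :=
    fun n => Measure.isProbabilityMeasure_map (hf n).aemeasurable
  refine (Measure.pi_eq fun s hs => ?_).symm
  rw [Measure.map_apply hmeas (MeasurableSet.univ_pi hs)]
  have hpre : (fun ω n => f n ω) ⁻¹' Set.pi Set.univ s = ⋂ n ∈ Finset.univ, f n ⁻¹' s n := by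
    ext ω; simp [Set.mem_pi]
  rw [hpre, hind.measure_inter_preimage_eq_mul Finset.univ (fun i _ => hs i)]
  exact Finset.prod_congr rfl fun n _ => (Measure.map_apply (hf n) (hs n)).symm

lemma aux_signs {N : ℕ} {f : Fin N → Ω → X}
    (hf : ∀ n, StronglyMeasurable (f n))
    (hind : iIndepFun f P)
    (hsym : ∀ n, P.map (f n) = P.map (fun ω => -(f n ω)))
    (ε : Fin N → ℝ) (hε : ∀ n, ε n = 1 ∨ ε n = -1) :
    ∫ ω, ‖∑ n, ε n • f n ω‖ ^ 2 ∂P = ∫ ω, ‖∑ n, f n ω‖ ^ 2 ∂P := by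
  have hfm : ∀ n, Measurable (f n) := fun n => (hf n).measurable
  set K : Fin N → Set X := fun n => closure (range (f n) ∪ range (fun ω => -(f n ω))) with hK
  have hKc : ∀ n, IsClosed (K n) := fun n => isClosed_closure
  have hKm : ∀ n, MeasurableSet (K n) := fun n => (hKc n).measurableSet
  have hKsep : ∀ n, IsSeparable (K n) := by
    intro n
    refine IsSeparable.closure ?_
    refine ((hf n).isSeparable_range).union ?_
    have : (range fun ω => -(f n ω)) = Neg.neg '' range (f n) := by
      rw [← Set.range_comp]; rfl
    rw [this]
    exact ((hf n).isSeparable_range).image continuous_neg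
  haveI : ∀ n, SeparableSpace (K n) := fun n => (hKsep n).separableSpace
  haveI : ∀ n, SecondCountableTopology (K n) :=
    fun n => UniformSpace.secondCountable_of_separable _
  have hmem1 : ∀ n ω, f n ω ∈ K n := fun n ω => subset_closure (Or.inl ⟨ω, rfl⟩)
  have hmem2 : ∀ n ω, ε n • f n ω ∈ K n := by
    intro n ω
    rcases hε n with h | h
    · rw [h, one_smul]; exact hmem1 n ω
    · rw [h, neg_one_smul]; exact subset_closure (Or.inr ⟨ω, rfl⟩)
  set f' : ∀ n, Ω → K n := fun n ω => ⟨f n ω, hmem1 n ω⟩ with hf'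
  set s' : ∀ n, Ω → K n := fun n ω => ⟨ε n • f n ω, hmem2 n ω⟩ with hs'
  have hsm : ∀ n, Measurable fun ω => ε n • f n ω := fun n =>
    ((continuous_const_smul (ε n)).measurable).comp (hfm n)
  have hf'm : ∀ n, Measurable (f' n) := fun n => (hfm n).subtype_mk
  have hs'm : ∀ n, Measurable (s' n) := fun n => (hsm n).subtype_mk
  have hindf' : iIndepFun f' P :=
    aux_iIndepFun_subtype_mk hmem1 hind
  have hinds' : iIndepFun s' P := by
    have hsX : iIndepFun (fun n ω => ε n • f n ω) P :=
      hind.comp (fun n x => ε n • x) fun n => (continuous_const_smul (ε n)).measurable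
    exact aux_iIndepFun_subtype_mk hmem2 hsX
  have hmarg : ∀ n, P.map (s' n) = P.map (f' n) := by
    intro n
    refine aux_map_subtype_val_inj (hKm n) ?_
    rw [Measure.map_map measurable_subtype_coe (hs'm n),
      Measure.map_map measurable_subtype_coe (hf'm n)]
    show P.map (fun ω => ε n • f n ω) = P.map (f n)
    rcases hε n with h | h
    · simp only [h, one_smul]
    · simp only [h, neg_one_smul]
      exact (hsym n).symm
  have key : P.map (fun ω n => s' n ω) = P.map (fun ω n => f' n ω) := by
    rw [aux_map_tuple_eq_pi hs'm hinds', aux_map_tuple_eq_pi hf'm hindf']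
    exact congrArg Measure.pi (funext hmarg)
  set g : (∀ n, K n) → ℝ := fun v => ‖∑ n, (v n : X)‖ ^ 2 with hg
  have hgc : Continuous g := by
    have : Continuous fun v : ∀ n, K n => ∑ n, (v n : X) :=
      continuous_finset_sum _ fun n _ => continuous_subtype_val.comp (continuous_apply n)
    exact this.norm.pow 2
  calc ∫ ω, ‖∑ n, ε n • f n ω‖ ^ 2 ∂P
      = ∫ ω, g (fun n => s' n ω) ∂P := rfl
    _ = ∫ v, g v ∂(P.map (fun ω n => s' n ω)) :=
        (integral_map (measurable_pi_lambda _ hs'm).aemeasurable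
          hgc.aestronglyMeasurable).symm
    _ = ∫ v, g v ∂(P.map (fun ω n => f' n ω)) := by rw [key]
    _ = ∫ ω, g (fun n => f' n ω) ∂P :=
        integral_map (measurable_pi_lambda _ hf'm).aemeasurable hgc.aestronglyMeasurable
    _ = _ := rfl

lemma aux_add_indep_symm {f g : Ω → X}
    (hfm : StronglyMeasurable f) (hgm : StronglyMeasurable g)
    (hfg : IndepFun f g P)
    (hgs : P.map g = P.map (fun ω => -g ω))
    (hf2 : MemLp f 2 P) (hg2 : MemLp g 2 P) :
    ∫ ω, ‖f ω‖ ^ 2 ∂P ≤ ∫ ω, ‖f ω + g ω‖ ^ 2 ∂P := by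
  set K : Set X := closure (range f) with hKdef
  set L : Set X := closure (range g ∪ range (fun ω => -g ω)) with hLdef
  have hKm : MeasurableSet K := isClosed_closure.measurableSet
  have hLm : MeasurableSet L := isClosed_closure.measurableSet
  have hKsep : IsSeparable K := hfm.isSeparable_range.closure
  have hLsep : IsSeparable L := by
    refine IsSeparable.closure ?_
    refine hgm.isSeparable_range.union ?_
    have : (range fun ω => -g ω) = Neg.neg '' range g := by rw [← Set.range_comp]; rfl
    rw [this]
    exact hgm.isSeparable_range.image continuous_neg
  haveI : SeparableSpace K := hKsep.separableSpace
  haveI : SeparableSpace L := hLsep.separableSpace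
  haveI : SecondCountableTopology K := UniformSpace.secondCountable_of_separable _
  haveI : SecondCountableTopology L := UniformSpace.secondCountable_of_separable _
  have hmf : ∀ ω, f ω ∈ K := fun ω => subset_closure ⟨ω, rfl⟩
  have hmg : ∀ ω, g ω ∈ L := fun ω => subset_closure (Or.inl ⟨ω, rfl⟩)
  have hmng : ∀ ω, -g ω ∈ L := fun ω => subset_closure (Or.inr ⟨ω, rfl⟩)
  set f' : Ω → K := fun ω => ⟨f ω, hmf ω⟩ with hf'
  set g' : Ω → L := fun ω => ⟨g ω, hmg ω⟩ with hg'
  set ng' : Ω → L := fun ω => ⟨-g ω, hmng ω⟩ with hng'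
  have hf'm : Measurable f' := hfm.measurable.subtype_mk
  have hg'm : Measurable g' := hgm.measurable.subtype_mk
  have hng'm : Measurable ng' := hgm.measurable.neg.subtype_mk
  have hind1 : IndepFun f' g' P := aux_indepFun_subtype_mk hmf hmg hfg
  have hind2 : IndepFun f' ng' P := by
    have : IndepFun f (fun ω => -g ω) P := hfg.comp measurable_id measurable_neg
    exact aux_indepFun_subtype_mk hmf hmng this
  have hmargs : P.map g' = P.map ng' := by
    refine aux_map_subtype_val_inj hLm ?_
    rw [Measure.map_map measurable_subtype_coe hg'm,
      Measure.map_map measurable_subtype_coe hng'm]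
    exact hgs
  have hpair : P.map (fun ω => (f' ω, g' ω)) = P.map (fun ω => (f' ω, ng' ω)) := by
    rw [(indepFun_iff_map_prod_eq_prod_map_map hf'm.aemeasurable hg'm.aemeasurable).mp hind1,
      (indepFun_iff_map_prod_eq_prod_map_map hf'm.aemeasurable hng'm.aemeasurable).mp hind2,
      hmargs]
  set h : K × L → ℝ := fun p => ‖(p.1 : X) + (p.2 : X)‖ ^ 2 with hh
  have hhc : Continuous h := by
    have : Continuous fun p : K × L => (p.1 : X) + (p.2 : X) :=
      (continuous_subtype_val.comp continuous_fst).add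
        (continuous_subtype_val.comp continuous_snd)
    exact this.norm.pow 2
  have E1 : ∫ ω, ‖f ω + g ω‖ ^ 2 ∂P = ∫ ω, ‖f ω - g ω‖ ^ 2 ∂P := by
    calc ∫ ω, ‖f ω + g ω‖ ^ 2 ∂P
        = ∫ p, h p ∂(P.map fun ω => (f' ω, g' ω)) :=
          (integral_map (hf'm.prodMk hg'm).aemeasurable hhc.aestronglyMeasurable).symm
      _ = ∫ p, h p ∂(P.map fun ω => (f' ω, ng' ω)) := by rw [hpair]
      _ = ∫ ω, ‖f ω + -g ω‖ ^ 2 ∂P :=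
          integral_map (hf'm.prodMk hng'm).aemeasurable hhc.aestronglyMeasurable
      _ = _ := by simp_rw [← sub_eq_add_neg]
  have int_conv : ∀ {φ : Ω → X}, MemLp φ 2 P → Integrable (fun ω => ‖φ ω‖ ^ 2) P := by
    intro φ hφ
    have h2 := hφ.integrable_norm_rpow two_ne_zero ENNReal.ofNat_ne_top
    have he : (fun ω => ‖φ ω‖ ^ (2 : ℕ)) = fun ω => ‖φ ω‖ ^ ((2 : ℝ≥0∞)).toReal := by
      funext ω
      rw [ENNReal.toReal_ofNat, ← Real.rpow_natCast (‖φ ω‖) 2]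
      norm_num
    rw [he]
    exact h2
  have If : Integrable (fun ω => ‖f ω‖ ^ 2) P := int_conv hf2
  have Ifg : Integrable (fun ω => ‖f ω + g ω‖ ^ 2) P := by
    have := int_conv (hf2.add hg2)
    simpa [Pi.add_apply] using this
  have Ifg' : Integrable (fun ω => ‖f ω - g ω‖ ^ 2) P := by
    have := int_conv (hf2.sub hg2)
    simpa [Pi.sub_apply] using this
  have hpt : ∀ ω, ‖f ω‖ ^ 2 ≤ (‖f ω + g ω‖ ^ 2 + ‖f ω - g ω‖ ^ 2) / 2 := by
    intro ω
    have h1 : ‖f ω + f ω‖ ≤ ‖f ω + g ω‖ + ‖f ω - g ω‖ := by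
      have he : f ω + f ω = (f ω + g ω) + (f ω - g ω) := by abel
      rw [he]; exact norm_add_le _ _
    have h2 : ‖f ω + f ω‖ = 2 * ‖f ω‖ := by
      rw [← two_smul ℝ, norm_smul]; simp
    rw [h2] at h1
    nlinarith [norm_nonneg (f ω), norm_nonneg (f ω + g ω), norm_nonneg (f ω - g ω),
      sq_nonneg (‖f ω + g ω‖ - ‖f ω - g ω‖)]
  calc ∫ ω, ‖f ω‖ ^ 2 ∂P
      ≤ ∫ ω, (‖f ω + g ω‖ ^ 2 + ‖f ω - g ω‖ ^ 2) / 2 ∂P :=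
        integral_mono If ((Ifg.add Ifg').div_const 2) hpt
    _ = (∫ ω, ‖f ω + g ω‖ ^ 2 ∂P + ∫ ω, ‖f ω - g ω‖ ^ 2 ∂P) / 2 := by
        rw [integral_div, integral_add Ifg Ifg']
    _ = ∫ ω, ‖f ω + g ω‖ ^ 2 ∂P := by rw [← E1]; ring

end Aux




open MeasureTheory ProbabilityTheory Function
open scoped ENNReal NNReal

set_option maxHeartbeats 1000000 in
set_option synthInstance.maxHeartbeats 400000 in
/-- Let `G : Σ → L²(Ω;X)` be a countably additive vector measure whose values
are symmetric random variables such that the values on disjoint sets are independent. Then `G`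
is of bounded randomised variation, `‖G‖_{V^r} = ‖G(S)‖_{L²(Ω;X)}`, and for all disjoint
measurable `A_1, …, A_N`,
`𝔼̃ ‖∑ r̃_n G(A_n)‖²_{L²(Ω;X)} = 𝔼 ‖∑ G(A_n)‖²_X ≤ 𝔼 ‖G(S)‖²_X`,
where `(r̃_n)` is a Rademacher sequence on an auxiliary probability space. -/
theorem randomisedVariation_of_independent_symmetric
    {S : Type*} [MeasurableSpace S]
    {X : Type*} [NormedAddCommGroup X] [NormedSpace ℝ X] [CompleteSpace X]
    [MeasurableSpace X] [BorelSpace X]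
    {Ω : Type*} [MeasurableSpace Ω] (P : Measure Ω) [IsProbabilityMeasure P]
    {Ω' : Type*} [MeasurableSpace Ω'] (P' : Measure Ω') [IsProbabilityMeasure P']
    (r : ℕ → Ω' → ℝ) (hr : IsRademacherSeq P' r)
    (G : VectorMeasure S (Lp X 2 P))
    -- (a) each `G(A)` is a symmetric random variable:
    (hsym : ∀ A : Set S, MeasurableSet A →
      Measure.map (fun ω => (G A : Ω → X) ω) P = Measure.map (fun ω => -(G A : Ω → X) ω) P)
    -- (b) the values of `G` on disjoint sets are independent:
    (hindep : ∀ (N : ℕ) (A : Fin N → Set S), (∀ n, MeasurableSet (A n)) →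
      Pairwise (Disjoint on A) →
      iIndepFun (fun n ω => (G (A n) : Ω → X) ω) P) :
    HasBoundedRandVariation P' r ⇑G ∧
    randVar P' r ⇑G = ‖G (Set.univ : Set S)‖ ∧
    ∀ (N : ℕ) (A : Fin N → Set S), (∀ n, MeasurableSet (A n)) →
      Pairwise (Disjoint on A) →
      (∫ ω', ‖∑ n : Fin N, r n ω' • G (A n)‖ ^ 2 ∂P')
          = (∫ ω, ‖∑ n : Fin N, (G (A n) : Ω → X) ω‖ ^ 2 ∂P) ∧
        (∫ ω, ‖∑ n : Fin N, (G (A n) : Ω → X) ω‖ ^ 2 ∂P)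
          ≤ ∫ ω, ‖(G (Set.univ : Set S) : Ω → X) ω‖ ^ 2 ∂P := by
  obtain ⟨hrm, hri, hrd⟩ := hr
  -- a.e., each Rademacher variable takes the values 1 or -1
  have hrae : ∀ n : ℕ, ∀ᵐ ω' ∂P', r n ω' = 1 ∨ r n ω' = -1 := by
    intro n
    have hms : MeasurableSet ({1, -1} : Set ℝ) :=
      (measurableSet_singleton (-1)).insert 1
    have hone : P' (r n ⁻¹' {1, -1}) = 1 := by
      rw [← Measure.map_apply (hrm n) hms, hrd n]
      simp [Measure.dirac_apply' _ hms, ENNReal.inv_two_add_inv_two]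
    have hcompl : P' ((r n ⁻¹' {1, -1})ᶜ) = 0 := by
      rw [measure_compl ((hms.preimage (hrm n))) (measure_ne_top _ _), hone, measure_univ,
        tsub_self]
    have hset : {ω' | ¬(r n ω' = 1 ∨ r n ω' = -1)} = (r n ⁻¹' {1, -1})ᶜ := by
      ext x; simp [not_or]
    rw [ae_iff, hset]
    exact hcompl
  -- part 3
  have part3 : ∀ (N : ℕ) (A : Fin N → Set S), (∀ n, MeasurableSet (A n)) →
      Pairwise (Disjoint on A) →
      (∫ ω', ‖∑ n : Fin N, r n ω' • G (A n)‖ ^ 2 ∂P')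
          = (∫ ω, ‖∑ n : Fin N, (G (A n) : Ω → X) ω‖ ^ 2 ∂P) ∧
        (∫ ω, ‖∑ n : Fin N, (G (A n) : Ω → X) ω‖ ^ 2 ∂P)
          ≤ ∫ ω, ‖(G (Set.univ : Set S) : Ω → X) ω‖ ^ 2 ∂P := by
    intro N A hA hd
    have hfsm : ∀ n : Fin N, StronglyMeasurable (⇑(G (A n))) :=
      fun n => Lp.stronglyMeasurable _
    have hindf := hindep N A hA hd
    have hsymf : ∀ n : Fin N, P.map (⇑(G (A n))) = P.map fun ω => -((G (A n)) ω) :=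
      fun n => hsym (A n) (hA n)
    constructor
    · -- the equality
      have hconst : ∀ᵐ ω' ∂P',
          ‖∑ n : Fin N, r n ω' • G (A n)‖ ^ 2
            = ∫ ω, ‖∑ n : Fin N, (G (A n)) ω‖ ^ 2 ∂P := by
        have hall : ∀ᵐ ω' ∂P', ∀ n : Fin N, r n ω' = 1 ∨ r n ω' = -1 :=
          ae_all_iff.2 fun n : Fin N => hrae n
        filter_upwards [hall] with ω' hω'
        have h1 : ‖∑ n : Fin N, r n ω' • G (A n)‖ ^ 2
            = ∫ ω, ‖∑ n : Fin N, r (n : ℕ) ω' • (G (A n)) ω‖ ^ 2 ∂P := by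
          rw [aux_norm_sq_eq_integral]
          refine integral_congr_ae ?_
          have hcs := aux_coeFn_sum (P := P) Finset.univ
            (fun n : Fin N => r (n : ℕ) ω' • G (A n))
          have hsm : ∀ᵐ ω ∂P, ∀ n : Fin N,
              (⇑(r (n : ℕ) ω' • G (A n)) : Ω → X) ω = r (n : ℕ) ω' • (G (A n)) ω :=
            ae_all_iff.2 fun n => Lp.coeFn_smul (r (n : ℕ) ω') (G (A n))
          filter_upwards [hcs, hsm] with ω h2 h3
          rw [h2]
          simp only [h3]
        rw [h1]
        exact aux_signs hfsm hindf hsymf (fun n => r (n : ℕ) ω') hω'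
      rw [integral_congr_ae hconst, integral_const]
      simp
    · -- the inequality
      set U : Set S := ⋃ n, A n with hUdef
      have hU : MeasurableSet U := MeasurableSet.iUnion fun n => hA n
      have hGU : G U = ∑ n : Fin N, G (A n) := by
        rw [hUdef, VectorMeasure.of_disjoint_iUnion hA hd, tsum_fintype]
      have hUc : MeasurableSet Uᶜ := hU.compl
      -- independence of G U and G Uᶜ
      set g2 : Fin 2 → Set S := ![U, Uᶜ] with hg2
      have hg2m : ∀ i, MeasurableSet (g2 i) := by
        intro i; fin_cases i <;> simpa [hg2] using by first | exact hU | exact hUc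
      have hg2d : Pairwise (Disjoint on g2) := by
        intro i j hij
        fin_cases i <;> fin_cases j
        · exact absurd rfl hij
        · simpa [hg2, Function.onFun] using disjoint_compl_right
        · simpa [hg2, Function.onFun] using disjoint_compl_left
        · exact absurd rfl hij
      have hind2 := hindep 2 g2 hg2m hg2d
      have hIF : IndepFun (fun ω => (G U) ω) (fun ω => (G Uᶜ) ω) P := by
        have := hind2.indepFun (i := 0) (j := 1) (by decide)
        simpa [hg2] using this
      have key := aux_add_indep_symm (P := P)
        (Lp.stronglyMeasurable (G U)) (Lp.stronglyMeasurable (G Uᶜ))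
        hIF (hsym Uᶜ hUc) (Lp.memLp _) (Lp.memLp _)
      have e1 : ∫ ω, ‖∑ n : Fin N, (G (A n)) ω‖ ^ 2 ∂P = ∫ ω, ‖(G U) ω‖ ^ 2 ∂P := by
        refine integral_congr_ae ?_
        have hcs := aux_coeFn_sum (P := P) Finset.univ (fun n : Fin N => G (A n))
        filter_upwards [hcs] with ω h2
        rw [hGU, h2]
      have e2 : ∫ ω, ‖(G U) ω + (G Uᶜ) ω‖ ^ 2 ∂P
          = ∫ ω, ‖(G (Set.univ : Set S)) ω‖ ^ 2 ∂P := by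
        have huniv : G (Set.univ : Set S) = G U + G Uᶜ := by
          have h3 := VectorMeasure.of_union (v := G) disjoint_compl_right hU hUc
          rw [Set.union_compl_self U] at h3
          exact h3
        refine (integral_congr_ae ?_).symm
        filter_upwards [Lp.coeFn_add (G U) (G Uᶜ)] with ω h2
        rw [huniv, h2, Pi.add_apply]
      rw [e1, ← e2]
      exact key
  -- assemble
  have hnormeq : Real.sqrt (∫ ω, ‖(G (Set.univ : Set S)) ω‖ ^ 2 ∂P)
      = ‖G (Set.univ : Set S)‖ := by
    rw [← aux_norm_sq_eq_integral, Real.sqrt_sq (norm_nonneg _)]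
  have mem : ‖G (Set.univ : Set S)‖ ∈ randVarSet P' r ⇑G := by
    refine ⟨1, fun _ => Set.univ, fun _ => MeasurableSet.univ, Subsingleton.pairwise, ?_⟩
    have h := (part3 1 (fun _ => Set.univ) (fun _ => MeasurableSet.univ)
      Subsingleton.pairwise).1
    rw [h]
    rw [show (∫ ω, ‖∑ n : Fin 1, (G (Set.univ : Set S)) ω‖ ^ 2 ∂P)
        = ∫ ω, ‖(G (Set.univ : Set S)) ω‖ ^ 2 ∂P by simp [Fin.sum_univ_one]]
    exact hnormeq.symm
  have ub : ∀ v ∈ randVarSet P' r ⇑G, v ≤ ‖G (Set.univ : Set S)‖ := by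
    rintro v ⟨N, A, hA, hd, rfl⟩
    obtain ⟨heq, hle⟩ := part3 N A hA hd
    rw [heq]
    calc Real.sqrt (∫ ω, ‖∑ n : Fin N, (G (A n)) ω‖ ^ 2 ∂P)
        ≤ Real.sqrt (∫ ω, ‖(G (Set.univ : Set S)) ω‖ ^ 2 ∂P) := Real.sqrt_le_sqrt hle
      _ = ‖G (Set.univ : Set S)‖ := hnormeq
  exact ⟨⟨_, ub⟩, le_antisymm (csSup_le ⟨_, mem⟩ ub) (le_csSup ⟨_, ub⟩ mem), part3⟩
end
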